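/- arXiv:1608.05744 — 2 statements merged into one kernel-verified Lean document; each statement's English description precedes it below -/
import Mathlib

section
/- Let λ, v, u be positive integers and let M = m_1, m_2, …, m_t be a non-decreasing sequence of positive even integers. If there exists an (M)-cycle decomposition of λK_{v,u}, then all of the following hold: (a) m_t ≤ 2·min(v,u); (b) λv ≡ λu ≡ 0 (mod 2); (c) if λ is even, then t ≤ (λ/2)·v·u − m_t + 2; (d) if λ is odd, then 2·ν_2(M) ≤ (λ−1)·v·u. -/
namespace CycleDecompBipartite

variable {V : Type*} [Fintype V] [DecidableEq V]

/-- The multiset of edges of the path `f 0, f 1, …, f n`. -/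
def pathEdges {n : ℕ} (f : Fin (n + 1) → V) : Multiset (Sym2 V) :=
  ((List.finRange n).map fun i => s(f i.castSucc, f i.succ) : List (Sym2 V))

/-- `P` is the edge multiset of an `m`-path from `x` to `y`. -/
def IsPathFromTo (m : ℕ) (x y : V) (P : Multiset (Sym2 V)) : Prop :=
  ∃ f : Fin (m + 1) → V, Function.Injective f ∧ f 0 = x ∧ f (Fin.last m) = y ∧ P = pathEdges f

/-- `P` is the edge multiset of an `m`-path. -/
def IsPath (m : ℕ) (P : Multiset (Sym2 V)) : Prop :=
  ∃ x y : V, IsPathFromTo m x y P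

/-- The multiset of edges of the cycle `f 0, f 1, …, f (m-1)` (indices mod `m`).
For `m = 2` this gives two parallel edges. -/
def cycleEdges {m : ℕ} (f : Fin m → V) : Multiset (Sym2 V) :=
  ((List.finRange m).map fun i =>
      s(f i, f ⟨((i : ℕ) + 1) % m, Nat.mod_lt _ (Nat.lt_of_le_of_lt (Nat.zero_le _) i.isLt)⟩) :
    List (Sym2 V))

/-- `C` is the edge multiset of an `m`-cycle (with `m` distinct vertices); a `2`-cycle is a
pair of parallel edges. -/
def IsCycleM (m : ℕ) (C : Multiset (Sym2 V)) : Prop :=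
  2 ≤ m ∧ ∃ f : Fin m → V, Function.Injective f ∧ C = cycleEdges f

/-- The degree of `x` in the edge multiset `L` (number of edges incident with `x`,
counted with multiplicity; there are no loops in the graphs considered here). -/
def degM (L : Multiset (Sym2 V)) (x : V) : ℕ :=
  Multiset.countP (fun e => x ∈ e) L

/-- The set of vertices covered by the edge multiset `C`. -/
def vertsOf (C : Multiset (Sym2 V)) : Set V :=
  {x | ∃ e ∈ C, x ∈ e}

/-- `F` is a 1-factor (perfect matching) on vertex set `V`. -/
def IsOneFactor (F : Multiset (Sym2 V)) : Prop :=
  ∀ x : V, degM F x = 1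

/-- An `(M)`-cycle packing (`G` even) or `(M)*`-cycle packing (`G` odd) of the multigraph with
edge multiset `E`, recorded by its 1-factor `F` (which is `0` when `G` is even), its list of
cycles `Cs` (of lengths given by `M`), and its leave `L`. -/
def IsStarPacking (E : Multiset (Sym2 V)) (M : List ℕ) (F : Multiset (Sym2 V))
    (Cs : List (Multiset (Sym2 V))) (L : Multiset (Sym2 V)) : Prop :=
  List.Forall₂ IsCycleM M Cs ∧ F + Cs.sum + L = E ∧
    (((∀ x : V, Even (degM E x)) ∧ F = 0) ∨ ((∀ x : V, Odd (degM E x)) ∧ IsOneFactor F))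

/-- The edge multiset of the multigraph `λ K_{v,u}`: `λ` parallel edges between every vertex of
`Fin v` and every vertex of `Fin u`. -/
def lamK (lam v u : ℕ) : Multiset (Sym2 (Fin v ⊕ Fin u)) :=
  lam • ((Finset.univ : Finset (Fin v × Fin u)).val.map fun p => s(Sum.inl p.1, Sum.inr p.2))

/-- The simple graph underlying an edge multiset. -/
def supportGraph (L : Multiset (Sym2 V)) : SimpleGraph V where
  Adj x y := x ≠ y ∧ s(x, y) ∈ L
  symm := by
    constructor
    intro x y h
    refine ⟨h.1.symm, ?_⟩
    rw [Sym2.eq_swap]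
    exact h.2
  loopless := by constructor; intro x h; exact h.1 rfl

/-- The number of non-trivial connected components (components containing an edge) of the
edge multiset `L`. -/
noncomputable def ntComps (L : Multiset (Sym2 V)) : ℕ :=
  {c : (supportGraph L).ConnectedComponent |
    ∃ x : V, (supportGraph L).connectedComponentMk x = c ∧ 0 < degM L x}.ncard

/-- `As` is a chain: a list of cycles such that consecutive cycles meet in exactly one vertex
and non-consecutive cycles are vertex-disjoint. -/
def IsChainList (As : List (Multiset (Sym2 V))) : Prop :=
  (∀ A ∈ As, ∃ m, IsCycleM m A) ∧
    ∀ i j : Fin As.length, i < j →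
      (vertsOf (As.get i) ∩ vertsOf (As.get j)).ncard = if (j : ℕ) = (i : ℕ) + 1 then 1 else 0

/-- `As` is a ring of cycles. -/
def IsRingList (As : List (Multiset (Sym2 V))) : Prop :=
  (∀ A ∈ As, ∃ m, IsCycleM m A) ∧ 2 ≤ As.length ∧
    (3 ≤ As.length → ∀ i j : Fin As.length, i < j →
      (vertsOf (As.get i) ∩ vertsOf (As.get j)).ncard =
        if (j : ℕ) = (i : ℕ) + 1 ∨ ((i : ℕ) = 0 ∧ (j : ℕ) = As.length - 1) then 1 else 0) ∧
    (∀ h2 : As.length = 2,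
      (vertsOf (As.get ⟨0, by omega⟩) ∩ vertsOf (As.get ⟨1, by omega⟩)).ncard = 2)

/-- `L'` is obtained from `L` by an `(α,β)`-switch with origin `a` and terminus `b`:
`L'` differs from `L` only in that each of the edges `αa`, `αb`, `βa`, `βb` is an edge of `L'`
if and only if it is not an edge of `L`. -/
def SwitchResult (L L' : Multiset (Sym2 V)) (α β a b : V) : Prop :=
  (∀ e : Sym2 V, e ≠ s(α, a) → e ≠ s(α, b) → e ≠ s(β, a) → e ≠ s(β, b) →
      Multiset.count e L' = Multiset.count e L) ∧
    ∀ e : Sym2 V, (e = s(α, a) ∨ e = s(α, b) ∨ e = s(β, a) ∨ e = s(β, b)) → (e ∈ L' ↔ e ∉ L)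

/-- `a` is a cut vertex of the edge multiset `L`: removing `a` (i.e. all edges at `a`)
disconnects two vertices that were connected in `L`. -/
def IsCutVertex (L : Multiset (Sym2 V)) (a : V) : Prop :=
  ∃ y z : V, y ≠ a ∧ z ≠ a ∧ (supportGraph L).Reachable y z ∧
    ¬ (supportGraph (L.filter fun e => a ∉ e)).Reachable y z


section Aux
set_option linter.unusedSectionVars false
set_option linter.unusedVariables false

def nxt {m : ℕ} (i : Fin m) : Fin m :=
  ⟨((i : ℕ) + 1) % m, Nat.mod_lt _ (Nat.lt_of_le_of_lt (Nat.zero_le _) i.isLt)⟩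

def prv {m : ℕ} (i : Fin m) : Fin m :=
  ⟨((i : ℕ) + (m - 1)) % m, Nat.mod_lt _ i.pos⟩

lemma mod_cancel {m i k : ℕ} (hi : i < m) (hk : k < m) (h : (i + k) % m = i) : k = 0 := by
  rcases Nat.lt_or_ge (i + k) m with h1 | h1
  · rw [Nat.mod_eq_of_lt h1] at h; omega
  · rw [Nat.mod_eq_sub_mod h1, Nat.mod_eq_of_lt (by omega)] at h; omega

lemma nxt_prv {m : ℕ} (i : Fin m) : nxt (prv i) = i := by
  have hm : 0 < m := i.pos
  apply Fin.ext
  show (((i : ℕ) + (m - 1)) % m + 1) % m = i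
  rw [Nat.mod_add_mod]
  have : (i : ℕ) + (m - 1) + 1 = (i : ℕ) + m := by omega
  rw [this, Nat.add_mod_right, Nat.mod_eq_of_lt i.isLt]

lemma prv_nxt {m : ℕ} (i : Fin m) : prv (nxt i) = i := by
  have hm : 0 < m := i.pos
  apply Fin.ext
  show (((i : ℕ) + 1) % m + (m - 1)) % m = i
  rw [Nat.mod_add_mod]
  have : (i : ℕ) + 1 + (m - 1) = (i : ℕ) + m := by omega
  rw [this, Nat.add_mod_right, Nat.mod_eq_of_lt i.isLt]

def nxtEquiv (m : ℕ) : Fin m ≃ Fin m :=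
  ⟨nxt, prv, prv_nxt, nxt_prv⟩

lemma nxt_ne {m : ℕ} (hm : 2 ≤ m) (i : Fin m) : nxt i ≠ i := by
  intro h
  have h2 : ((i : ℕ) + 1) % m = i := congrArg Fin.val h
  exact absurd (mod_cancel i.isLt (by omega) h2) (by omega)

lemma nxt_nxt_ne {m : ℕ} (hm : 3 ≤ m) (i : Fin m) : nxt (nxt i) ≠ i := by
  intro h
  have h2 : (((i : ℕ) + 1) % m + 1) % m = i := congrArg Fin.val h
  rw [Nat.mod_add_mod] at h2
  rw [show (i : ℕ) + 1 + 1 = (i : ℕ) + 2 from by omega] at h2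
  exact absurd (mod_cancel i.isLt (by omega) h2) (by omega)

lemma cycleEdges_eq_map {m : ℕ} (f : Fin m → V) :
    cycleEdges f = Multiset.map (fun i => s(f i, f (nxt i))) (Finset.univ : Finset (Fin m)).val := by
  rfl

lemma card_cycleEdges {m : ℕ} (f : Fin m → V) : Multiset.card (cycleEdges f) = m := by
  simp [cycleEdges]

lemma edge_mem_cycleEdges {m : ℕ} (f : Fin m → V) (i : Fin m) :
    s(f i, f (nxt i)) ∈ cycleEdges f := by
  rw [cycleEdges_eq_map]
  exact Multiset.mem_map.2 ⟨i, by simp, rfl⟩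

lemma mem_cycleEdges {m : ℕ} {f : Fin m → V} {e : Sym2 V} :
    e ∈ cycleEdges f ↔ ∃ i, s(f i, f (nxt i)) = e := by
  rw [cycleEdges_eq_map, Multiset.mem_map]
  simp

lemma cycleEdges_nondiag {m : ℕ} (hm : 2 ≤ m) {f : Fin m → V} (hf : Function.Injective f) :
    ∀ e ∈ cycleEdges f, ¬ e.IsDiag := by
  intro e he
  obtain ⟨i, rfl⟩ := mem_cycleEdges.1 he
  rw [Sym2.mk_isDiag_iff]
  intro h
  exact nxt_ne hm i (hf h.symm)

lemma cycleEdges_nodup {m : ℕ} (hm : 3 ≤ m) {f : Fin m → V} (hf : Function.Injective f) :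
    (cycleEdges f).Nodup := by
  show (List.map _ (List.finRange m)).Nodup
  apply List.Nodup.map _ (List.nodup_finRange m)
  intro i j h
  rcases Sym2.eq_iff.1 h with ⟨h1, _⟩ | ⟨h1, h2⟩
  · exact hf h1
  · exfalso
    have h1' : f i = f (nxt j) := h1
    have h2' : f (nxt i) = f j := h2
    have e1 : i = nxt j := hf h1'
    have e2 : nxt i = j := hf h2'
    exact nxt_nxt_ne hm j (by rw [← e1, e2])

lemma degM_cycleEdges {m : ℕ} (hm : 2 ≤ m) {f : Fin m → V} (hf : Function.Injective f) (x : V) :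
    degM (cycleEdges f) x = if x ∈ Set.range f then 2 else 0 := by
  rw [degM, cycleEdges_eq_map, Multiset.countP_map]
  have hcard : ∀ (p : Fin m → Prop) [DecidablePred p],
      Multiset.card (Multiset.filter p (Finset.univ : Finset (Fin m)).val)
        = (Finset.filter p Finset.univ).card := fun p _ => rfl
  rw [hcard]
  split
  · rename_i hx
    obtain ⟨j, rfl⟩ := hx
    have hfil : (Finset.filter (fun i => f j ∈ s(f i, f (nxt i))) (Finset.univ : Finset (Fin m)))
        = {j, prv j} := by
      ext i
      simp only [Finset.mem_filter, Finset.mem_univ, true_and, Sym2.mem_iff,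
        Finset.mem_insert, Finset.mem_singleton]
      constructor
      · rintro (h | h)
        · exact Or.inl (hf h.symm)
        · right
          have : nxt i = j := hf h.symm
          rw [← this, prv_nxt]
      · rintro (rfl | rfl)
        · exact Or.inl rfl
        · right; rw [nxt_prv]
    rw [hfil]
    apply Finset.card_pair
    intro h
    have := congrArg nxt h
    rw [nxt_prv] at this
    exact nxt_ne hm j this
  · rename_i hx
    rw [Finset.card_eq_zero, Finset.filter_eq_empty_iff]
    intro i _
    rw [Sym2.mem_iff]
    rintro (h | h)
    · exact hx ⟨i, h.symm⟩
    · exact hx ⟨nxt i, h.symm⟩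

lemma cycleEdges_two (f : Fin 2 → V) :
    cycleEdges f = Multiset.replicate 2 s(f 0, f 1) := by
  have h1 : cycleEdges f = (↑[s(f 0, f 1), s(f 1, f 0)] : Multiset (Sym2 V)) := rfl
  rw [h1, Sym2.eq_swap (a := f 1) (b := f 0)]
  rfl

lemma count_cycleEdges_two (f : Fin 2 → V) (e : Sym2 V) :
    Multiset.count e (cycleEdges f) = if e = s(f 0, f 1) then 2 else 0 := by
  rw [cycleEdges_two, Multiset.count_replicate]
  simp [eq_comm]

lemma count_cycleEdges_le_one {m : ℕ} (hm : 3 ≤ m) {f : Fin m → V}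
    (hf : Function.Injective f) (e : Sym2 V) : Multiset.count e (cycleEdges f) ≤ 1 :=
  Multiset.nodup_iff_count_le_one.1 (cycleEdges_nodup hm hf) e


section SecB
variable {V : Type*} [Fintype V] [DecidableEq V]

lemma mem_list_sum {α : Type*} {l : List (Multiset α)} {a : α} :
    a ∈ l.sum ↔ ∃ s ∈ l, a ∈ s := by
  induction l with
  | nil => simp
  | cons h t ih => simp [ih]

lemma degM_list_sum (l : List (Multiset (Sym2 V))) (x : V) :
    degM l.sum x = (l.map (fun C => degM C x)).sum := by
  induction l with
  | nil => simp [degM]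
  | cons h t ih => simp only [List.sum_cons, List.map_cons, degM, Multiset.countP_add] at *; omega

lemma even_list_sum {l : List ℕ} (h : ∀ n ∈ l, Even n) : Even l.sum := by
  induction l with
  | nil => simp
  | cons a t ih =>
    rw [List.sum_cons]
    exact (h a (by simp)).add (ih fun n hn => h n (by simp [hn]))

section lamKfacts
variable {lam v u : ℕ}

lemma mem_lamK (hlam : lam ≠ 0) {e : Sym2 (Fin v ⊕ Fin u)} :
    e ∈ lamK lam v u ↔ ∃ p : Fin v × Fin u, s(Sum.inl p.1, Sum.inr p.2) = e := by
  rw [lamK, Multiset.mem_nsmul]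
  simp [hlam, Multiset.mem_map]

lemma card_lamK : Multiset.card (lamK lam v u) = lam * (v * u) := by
  rw [lamK, Multiset.card_nsmul, Multiset.card_map]
  simp [Finset.card_univ]

lemma count_lamK_cross (a : Fin v) (b : Fin u) :
    Multiset.count s(Sum.inl a, Sum.inr b) (lamK lam v u) = lam := by
  rw [lamK, Multiset.count_nsmul, Multiset.count_map]
  have : Multiset.filter
      (fun p : Fin v × Fin u => s(Sum.inl a, Sum.inr b) = s(Sum.inl p.1, Sum.inr p.2))
      (Finset.univ : Finset (Fin v × Fin u)).val
      = (Finset.filter (fun p : Fin v × Fin u => p = (a, b)) Finset.univ).val := by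
    rw [Finset.filter_val]
    apply Multiset.filter_congr
    intro p _
    constructor
    · intro h
      rcases Sym2.eq_iff.1 h with ⟨h1, h2⟩ | ⟨h1, _⟩
      · have : a = p.1 := Sum.inl_injective h1
        have h2' : b = p.2 := Sum.inr_injective h2
        cases p; simp_all
      · exact absurd h1 (by simp)
    · rintro rfl; rfl
  rw [this]
  have : (Finset.filter (fun p : Fin v × Fin u => p = (a, b)) Finset.univ) = {(a, b)} := by
    ext p; simp
  rw [this]
  simp

lemma degM_lamK_inl (a : Fin v) : degM (lamK lam v u) (Sum.inl a) = lam * u := by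
  rw [degM, lamK, Multiset.countP_nsmul, Multiset.countP_map]
  congr 1
  have hcard : ∀ (p : Fin v × Fin u → Prop) [DecidablePred p],
      Multiset.card (Multiset.filter p (Finset.univ : Finset (Fin v × Fin u)).val)
        = (Finset.filter p Finset.univ).card := fun p _ => rfl
  rw [hcard]
  have h1 : (Finset.filter (fun p : Fin v × Fin u => Sum.inl a ∈ s(Sum.inl p.1, Sum.inr p.2))
      Finset.univ) = ({a} : Finset (Fin v)) ×ˢ (Finset.univ : Finset (Fin u)) := by
    ext ⟨x, y⟩
    simp only [Finset.mem_filter, Finset.mem_univ, true_and, Sym2.mem_iff, Finset.mem_product,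
      Finset.mem_singleton, and_true]
    constructor
    · rintro (h | h)
      · exact Sum.inl_injective h.symm
      · exact absurd h (by simp)
    · rintro rfl; exact Or.inl rfl
  rw [h1, Finset.card_product]
  simp

lemma degM_lamK_inr (b : Fin u) : degM (lamK lam v u) (Sum.inr b) = lam * v := by
  rw [degM, lamK, Multiset.countP_nsmul, Multiset.countP_map]
  congr 1
  have hcard : ∀ (p : Fin v × Fin u → Prop) [DecidablePred p],
      Multiset.card (Multiset.filter p (Finset.univ : Finset (Fin v × Fin u)).val)
        = (Finset.filter p Finset.univ).card := fun p _ => rfl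
  rw [hcard]
  have h1 : (Finset.filter (fun p : Fin v × Fin u => Sum.inr b ∈ s(Sum.inl p.1, Sum.inr p.2))
      Finset.univ) = (Finset.univ : Finset (Fin v)) ×ˢ ({b} : Finset (Fin u)) := by
    ext ⟨x, y⟩
    simp only [Finset.mem_filter, Finset.mem_univ, true_and, Sym2.mem_iff, Finset.mem_product,
      Finset.mem_singleton, true_and]
    constructor
    · rintro (h | h)
      · exact absurd h (by simp)
      · exact Sum.inr_injective h.symm
    · rintro rfl; exact Or.inr rfl
  rw [h1, Finset.card_product]
  simp [Nat.mul_comm]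

end lamKfacts

/-- Part (a) core: a cycle whose edges all cross the bipartition has length `≤ 2 min v u`. -/
lemma cycle_le_two_min {v u m : ℕ} (hv : 0 < v) (hu : 0 < u) (hm : 2 ≤ m)
    {f : Fin m → Fin v ⊕ Fin u} (hf : Function.Injective f)
    (hcross : ∀ i : Fin m, (f i).isLeft ≠ (f (nxt i)).isLeft) :
    m ≤ 2 * min v u := by
  classical
  have key : ∀ i : Fin m,
      ((if (f i).isLeft then 1 else 0) + (if (f (nxt i)).isLeft then 1 else 0) : ℕ) = 1 := by
    intro i
    have h := hcross i
    cases h1 : (f i).isLeft <;> cases h2 : (f (nxt i)).isLeft <;> simp_all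
  have hsum : ∀ g : Fin m → Bool,
      (∑ i : Fin m, if g i then (1:ℕ) else 0)
        = (Finset.filter (fun i => g i = true) (Finset.univ : Finset (Fin m))).card := by
    intro g
    rw [Finset.card_filter]
  have hm2 : m = 2 * (Finset.filter (fun i => (f i).isLeft = true)
      (Finset.univ : Finset (Fin m))).card := by
    have h1 : (m : ℕ) = ∑ _i : Fin m, 1 := by simp
    have h2 : (∑ i : Fin m,
        ((if (f i).isLeft then (1:ℕ) else 0) + (if (f (nxt i)).isLeft then 1 else 0)))
        = ∑ _i : Fin m, (1:ℕ) := Finset.sum_congr rfl (fun i _ => key i)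
    rw [Finset.sum_add_distrib] at h2
    have h3 : (∑ i : Fin m, if (f (nxt i)).isLeft then (1:ℕ) else 0)
        = ∑ i : Fin m, if (f i).isLeft then (1:ℕ) else 0 :=
      Equiv.sum_comp (nxtEquiv m) (fun j => if (f j).isLeft then (1:ℕ) else 0)
    rw [h3, hsum (fun i => (f i).isLeft)] at h2
    omega
  have hLv : (Finset.filter (fun i => (f i).isLeft = true)
      (Finset.univ : Finset (Fin m))).card ≤ v := by
    have := Finset.card_le_card_of_injOn
      (fun i => Sum.elim id (fun _ => (⟨0, hv⟩ : Fin v)) (f i))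
      (fun a _ => Finset.mem_univ _)
      (s := Finset.filter (fun i => (f i).isLeft = true) (Finset.univ : Finset (Fin m)))
      (t := (Finset.univ : Finset (Fin v))) ?_
    · simpa using this
    · intro i hi j hj hij
      simp only [Finset.coe_filter, Set.mem_setOf_eq] at hi hj
      obtain ⟨a, ha⟩ := Sum.isLeft_iff.1 hi.2
      obtain ⟨a', ha'⟩ := Sum.isLeft_iff.1 hj.2
      have hij' : Sum.elim id (fun _ => (⟨0, hv⟩ : Fin v)) (f i)
          = Sum.elim id (fun _ => (⟨0, hv⟩ : Fin v)) (f j) := hij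
      rw [ha, ha'] at hij'
      simp only [Sum.elim_inl, id] at hij'
      apply hf
      rw [ha, ha', hij']
  have hRu : (Finset.filter (fun i => ¬ ((f i).isLeft = true))
      (Finset.univ : Finset (Fin m))).card ≤ u := by
    have := Finset.card_le_card_of_injOn
      (fun i => Sum.elim (fun _ => (⟨0, hu⟩ : Fin u)) id (f i))
      (fun a _ => Finset.mem_univ _)
      (s := Finset.filter (fun i => ¬ ((f i).isLeft = true)) (Finset.univ : Finset (Fin m)))
      (t := (Finset.univ : Finset (Fin u))) ?_
    · simpa using this
    · intro i hi j hj hij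
      simp only [Finset.coe_filter, Set.mem_setOf_eq] at hi hj
      obtain ⟨b, hb⟩ := Sum.isRight_iff.1 (Sum.not_isLeft.1 hi.2)
      obtain ⟨b', hb'⟩ := Sum.isRight_iff.1 (Sum.not_isLeft.1 hj.2)
      have hij' : Sum.elim (fun _ => (⟨0, hu⟩ : Fin u)) id (f i)
          = Sum.elim (fun _ => (⟨0, hu⟩ : Fin u)) id (f j) := hij
      rw [hb, hb'] at hij'
      simp only [Sum.elim_inr, id] at hij'
      apply hf
      rw [hb, hb', hij']
  have hLR := Finset.card_filter_add_card_filter_not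
    (s := (Finset.univ : Finset (Fin m))) (fun i => (f i).isLeft = true)
  rw [Finset.card_univ, Fintype.card_fin] at hLR
  omega

end SecB

section SecC
variable {V : Type*} [Fintype V] [DecidableEq V]

/-- degree in a finset of edges -/
def degF (T : Finset (Sym2 V)) (x : V) : ℕ := degM T.val x

lemma degF_eq_card_filter (T : Finset (Sym2 V)) (x : V) :
    degF T x = (T.filter (fun e => x ∈ e)).card := by
  rw [degF, degM, Multiset.countP_eq_card_filter]
  rfl

/-- `S` is the edge set of a cycle of length at least 3. -/
def IsCyc (S : Finset (Sym2 V)) : Prop :=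
  ∃ (m : ℕ) (f : Fin m → V), 3 ≤ m ∧ Function.Injective f ∧ S.val = cycleEdges f

lemma IsCyc.three_le_card {S : Finset (Sym2 V)} (h : IsCyc S) : 3 ≤ S.card := by
  obtain ⟨m, f, hm, hf, hval⟩ := h
  have : S.card = m := by rw [Finset.card, hval, card_cycleEdges]
  omega

lemma IsCyc.nondiag {S : Finset (Sym2 V)} (h : IsCyc S) : ∀ e ∈ S, ¬ e.IsDiag := by
  obtain ⟨m, f, hm, hf, hval⟩ := h
  intro e he
  have : e ∈ S.val := he
  rw [hval] at this
  exact cycleEdges_nondiag (by omega) hf e this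

lemma IsCyc.degF_even {S : Finset (Sym2 V)} (h : IsCyc S) (x : V) : Even (degF S x) := by
  obtain ⟨m, f, hm, hf, hval⟩ := h
  rw [degF, hval, degM_cycleEdges (by omega) hf]
  split <;> simp

lemma IsCyc.degF_eq_two {S : Finset (Sym2 V)} (h : IsCyc S) {x : V} {e : Sym2 V}
    (he : e ∈ S) (hx : x ∈ e) : degF S x = 2 := by
  obtain ⟨m, f, hm, hf, hval⟩ := h
  have he' : e ∈ S.val := he
  rw [hval] at he'
  obtain ⟨i, rfl⟩ := mem_cycleEdges.1 he'
  have hxr : x ∈ Set.range f := by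
    rcases Sym2.mem_iff.1 hx with h1 | h1
    · exact ⟨i, h1.symm⟩
    · exact ⟨nxt i, h1.symm⟩
  rw [degF, hval, degM_cycleEdges (by omega) hf, if_pos hxr]

/-- count of an element in a finset's multiset -/
lemma count_val (e : Sym2 V) (S : Finset (Sym2 V)) :
    Multiset.count e S.val = if e ∈ S then 1 else 0 := by
  split
  · rename_i h
    exact Multiset.count_eq_one_of_mem S.nodup h
  · rename_i h
    exact Multiset.count_eq_zero_of_notMem h

lemma countP_mem_eq_count_sum (F : Multiset (Finset (Sym2 V))) (e : Sym2 V) :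
    F.countP (fun S => e ∈ S) = Multiset.count e ((F.map Finset.val).sum) := by
  induction F using Multiset.induction with
  | empty => simp
  | cons a F ih =>
    rw [Multiset.countP_cons, Multiset.map_cons, Multiset.sum_cons, Multiset.count_add, ih,
      count_val]
    omega

lemma degM_map_sum (F : Multiset (Finset (Sym2 V))) (x : V) :
    degM ((F.map Finset.val).sum) x = (F.map (fun S => degF S x)).sum := by
  induction F using Multiset.induction with
  | empty => simp [degM]
  | cons a F ih =>
    rw [Multiset.map_cons, Multiset.sum_cons, degM, Multiset.countP_add, Multiset.map_cons,
      Multiset.sum_cons, ← degM, ← degM, ih]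
    rfl

lemma symmDiff_card (a b : Finset (Sym2 V)) :
    (symmDiff a b).card + 2 * (a ∩ b).card = a.card + b.card := by
  have h1 : (a ∩ b : Finset (Sym2 V)) ⊆ (a ∪ b) := by
    intro e he
    exact Finset.mem_union.2 (Or.inl (Finset.mem_inter.1 he).1)
  have e1 : symmDiff a b = (a ∪ b) \ (a ∩ b) := by
    rw [symmDiff_eq_sup_sdiff_inf]; rfl
  rw [e1, Finset.card_sdiff_of_subset h1]
  have h3 := Finset.card_union_add_card_inter a b
  have h4 := Finset.card_le_card h1
  omega

lemma filter_symmDiff (p : Sym2 V → Prop) [DecidablePred p] (a b : Finset (Sym2 V)) :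
    (symmDiff a b).filter p = symmDiff (a.filter p) (b.filter p) := by
  ext e
  simp only [Finset.mem_filter, Finset.mem_symmDiff]
  tauto

lemma degF_symmDiff_even (a b : Finset (Sym2 V)) (ha : ∀ x, Even (degF a x))
    (hb : ∀ x, Even (degF b x)) (x : V) : Even (degF (symmDiff a b) x) := by
  rw [degF_eq_card_filter, filter_symmDiff]
  have h := symmDiff_card (a.filter (fun e => x ∈ e)) (b.filter (fun e => x ∈ e))
  obtain ⟨p, hp⟩ := ha x
  obtain ⟨q, hq⟩ := hb x
  rw [degF_eq_card_filter] at hp hq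
  exact ⟨p + q - (a.filter (fun e => x ∈ e) ∩ b.filter (fun e => x ∈ e)).card, by omega⟩

lemma degF_sdiff (S T : Finset (Sym2 V)) (hST : S ⊆ T) (x : V) :
    degF (T \ S) x = degF T x - degF S x := by
  rw [degF, Finset.sdiff_val, degM, Multiset.countP_sub (Finset.val_le_iff.2 hST)]
  rfl

end SecC

section SecC2
variable {V : Type*} [Fintype V] [DecidableEq V]

lemma exists_cycle_finset (T : Finset (Sym2 V)) (hnd : ∀ e ∈ T, ¬ e.IsDiag)
    (hev : ∀ x, Even (degF T x)) (hne : T.Nonempty) :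
    ∃ S : Finset (Sym2 V), S ⊆ T ∧ IsCyc S := by
  classical
  obtain ⟨e0, he0⟩ := hne
  obtain ⟨x0, y0, rfl⟩ : ∃ x y, e0 = s(x, y) := by
    induction e0 using Sym2.ind with | _ x y => exact ⟨x, y, rfl⟩
  have hx0y0 : x0 ≠ y0 := by
    have := hnd _ he0; rwa [Sym2.mk_isDiag_iff] at this
  set P : ℕ → Prop := fun n => ∃ f : Fin (n + 1) → V, Function.Injective f ∧
      ∀ i : ℕ, (hi : i + 1 ≤ n) → s(f ⟨i, by omega⟩, f ⟨i + 1, by omega⟩) ∈ T with hPdef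
  have hP1 : P 1 := by
    refine ⟨fun i => if (i : ℕ) = 0 then x0 else y0, ?_, ?_⟩
    · intro a b hab
      fin_cases a <;> fin_cases b <;> simp_all
    · intro i hi
      have hi0 : i = 0 := by omega
      subst hi0
      simpa using he0
  have hbd : ∀ n, P n → n + 1 ≤ Fintype.card V := by
    rintro n ⟨f, hf, -⟩
    calc n + 1 = Fintype.card (Fin (n + 1)) := (Fintype.card_fin _).symm
      _ ≤ Fintype.card V := Fintype.card_le_of_injective f hf
  have hcV : 2 ≤ Fintype.card V := hbd 1 hP1
  obtain ⟨N, hPN, hN1, hmax⟩ : ∃ N, P N ∧ 1 ≤ N ∧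
      ∀ k, N < k → k ≤ Fintype.card V → ¬ P k :=
    ⟨Nat.findGreatest P (Fintype.card V), Nat.findGreatest_spec (m := 1) (by omega) hP1,
      Nat.le_findGreatest (by omega) hP1, fun k h1 h2 => Nat.findGreatest_is_greatest h1 h2⟩
  obtain ⟨f, hf, hedge⟩ := hPN
  have hNlt : N < N + 1 := by omega
  have hlastedge : s(f ⟨N - 1, by omega⟩, f ⟨N, hNlt⟩) ∈ T := by
    have h := hedge (N - 1) (by omega)
    have heq : (⟨N - 1 + 1, by omega⟩ : Fin (N + 1)) = ⟨N, hNlt⟩ := by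
      apply Fin.ext
      show N - 1 + 1 = N
      omega
    rwa [heq] at h
  have hdeg : 2 ≤ degF T (f ⟨N, hNlt⟩) := by
    have h1 : 0 < degF T (f ⟨N, hNlt⟩) := by
      rw [degF, degM]
      refine Multiset.countP_pos.2 ⟨_, hlastedge, ?_⟩
      exact Sym2.mem_iff.2 (Or.inr rfl)
    obtain ⟨k, hk⟩ := hev (f ⟨N, hNlt⟩)
    omega
  rw [degF_eq_card_filter] at hdeg
  obtain ⟨e1, he1, e2, he2, hne12⟩ := Finset.one_lt_card.1
    (show 1 < (T.filter (fun e => f ⟨N, hNlt⟩ ∈ e)).card by omega)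
  obtain ⟨he1T, he1x⟩ := Finset.mem_filter.1 he1
  obtain ⟨he2T, he2x⟩ := Finset.mem_filter.1 he2
  obtain ⟨z1, rfl⟩ := Sym2.mem_iff_exists.1 he1x
  obtain ⟨z2, rfl⟩ := Sym2.mem_iff_exists.1 he2x
  have hz1 : f ⟨N, hNlt⟩ ≠ z1 := by
    have := hnd _ he1T; rwa [Sym2.mk_isDiag_iff] at this
  have hz2 : f ⟨N, hNlt⟩ ≠ z2 := by
    have := hnd _ he2T; rwa [Sym2.mk_isDiag_iff] at this
  have hz12 : z1 ≠ z2 := by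
    intro h; exact hne12 (by rw [h])
  have hchoice : ∃ y, y ≠ f ⟨N, hNlt⟩ ∧ s(f ⟨N, hNlt⟩, y) ∈ T ∧ y ≠ f ⟨N - 1, by omega⟩ := by
    by_cases h1 : z1 = f ⟨N - 1, by omega⟩
    · exact ⟨z2, Ne.symm hz2, he2T, by rw [← h1]; exact Ne.symm hz12⟩
    · exact ⟨z1, Ne.symm hz1, he1T, h1⟩
  obtain ⟨y, hyx, hyT, hyprev⟩ := hchoice
  by_cases hyr : y ∈ Set.range f
  · -- y is on the path: close off a cycle
    obtain ⟨j, hj⟩ := hyr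
    have hjN : (j : ℕ) + 2 ≤ N := by
      have h1 : (j : ℕ) ≠ N := by
        intro h
        exact hyx (by rw [← hj]; exact congrArg f (Fin.ext h))
      have h2 : (j : ℕ) ≠ N - 1 := by
        intro h
        exact hyprev (by rw [← hj]; exact congrArg f (Fin.ext h))
      have := j.isLt
      omega
    have hmc3 : 3 ≤ N - (j : ℕ) + 1 := by omega
    set mc := N - (j : ℕ) + 1 with hmc
    set g : Fin mc → V := fun i => f ⟨(j : ℕ) + (i : ℕ), by omega⟩ with hg
    have hginj : Function.Injective g := by
      intro a b hab
      have h1 := congrArg Fin.val (hf hab)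
      simp only at h1
      exact Fin.ext (by omega)
    refine ⟨⟨cycleEdges g, cycleEdges_nodup hmc3 hginj⟩, ?_, ⟨mc, g, hmc3, hginj, rfl⟩⟩
    intro e he
    have he' : e ∈ cycleEdges g := he
    obtain ⟨i, rfl⟩ := mem_cycleEdges.1 he'
    by_cases hi : (i : ℕ) + 1 < mc
    · have hnxt : nxt i = ⟨(i : ℕ) + 1, hi⟩ := Fin.ext (Nat.mod_eq_of_lt hi)
      rw [hnxt]
      have h2 : g ⟨(i : ℕ) + 1, hi⟩ = f ⟨(j : ℕ) + (i : ℕ) + 1, by omega⟩ := by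
        show f ⟨(j : ℕ) + ((i : ℕ) + 1), by omega⟩ = _
        exact congrArg f (Fin.ext (show (j : ℕ) + ((i : ℕ) + 1) = (j : ℕ) + (i : ℕ) + 1 by omega))
      have h3 : g i = f ⟨(j : ℕ) + (i : ℕ), by omega⟩ := rfl
      rw [h2, h3]
      exact hedge ((j : ℕ) + (i : ℕ)) (by omega)
    · have hieq : (i : ℕ) = mc - 1 := by have := i.isLt; omega
      have hnxt : nxt i = ⟨0, by omega⟩ := by
        apply Fin.ext
        show ((i : ℕ) + 1) % mc = 0
        rw [hieq, show mc - 1 + 1 = mc from by omega, Nat.mod_self]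
      rw [hnxt]
      have h1 : g i = f ⟨N, hNlt⟩ := by
        show f ⟨(j : ℕ) + (i : ℕ), by omega⟩ = _
        exact congrArg f (Fin.ext (show (j : ℕ) + (i : ℕ) = N by omega))
      have h2 : g ⟨0, by omega⟩ = f j := by
        show f ⟨(j : ℕ) + 0, by omega⟩ = _
        exact congrArg f (Fin.ext (show (j : ℕ) + 0 = (j : ℕ) by omega))
      rw [h1, h2, hj]
      exact hyT
  · -- y is new: extend the path, contradicting maximality
    exfalso
    have hPN1 : P (N + 1) := by
      refine ⟨fun k => if h : (k : ℕ) ≤ N then f ⟨(k : ℕ), by omega⟩ else y, ?_, ?_⟩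
      · intro a b hab
        dsimp only at hab
        by_cases ha : (a : ℕ) ≤ N <;> by_cases hb2 : (b : ℕ) ≤ N
        · rw [dif_pos ha, dif_pos hb2] at hab
          have := congrArg Fin.val (hf hab)
          exact Fin.ext (by simpa using this)
        · rw [dif_pos ha, dif_neg hb2] at hab
          exact absurd ⟨_, hab⟩ hyr
        · rw [dif_neg ha, dif_pos hb2] at hab
          exact absurd ⟨_, hab.symm⟩ hyr
        · exact Fin.ext (by have := a.isLt; have := b.isLt; omega)
      · intro i hi
        dsimp only
        by_cases hiN : i + 1 ≤ N
        · rw [dif_pos (show i ≤ N by omega), dif_pos (show i + 1 ≤ N from hiN)]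
          exact hedge i hiN
        · have hieq : i = N := by omega
          rw [dif_pos (show i ≤ N by omega), dif_neg (show ¬ (i + 1 ≤ N) by omega)]
          have heq2 : f ⟨i, by omega⟩ = f ⟨N, hNlt⟩ := congrArg f (Fin.ext hieq)
          rw [heq2]
          exact hyT
    exact hmax (N + 1) (by omega) (by have := hbd (N + 1) hPN1; omega) hPN1

end SecC2

section SecC3
variable {V : Type*} [Fintype V] [DecidableEq V]

lemma card_val_sum (L : Multiset (Finset (Sym2 V))) :
    Multiset.card ((L.map Finset.val).sum) = (L.map Finset.card).sum := by
  induction L using Multiset.induction with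
  | empty => simp
  | cons a L ih =>
    rw [Multiset.map_cons, Multiset.sum_cons, Multiset.card_add, ih, Multiset.map_cons,
      Multiset.sum_cons, Finset.card_def]

lemma cycle_decomp : ∀ (n : ℕ) (T : Finset (Sym2 V)), T.card ≤ n →
    (∀ e ∈ T, ¬ e.IsDiag) → (∀ x, Even (degF T x)) →
    ∃ F : Multiset (Finset (Sym2 V)), (∀ S ∈ F, IsCyc S) ∧ (F.map Finset.val).sum = T.val := by
  intro n
  induction n with
  | zero =>
    intro T hT _ _
    have hT0 : T = ∅ := Finset.card_eq_zero.1 (by omega)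
    exact ⟨0, by simp, by simp [hT0]⟩
  | succ n ih =>
    intro T hT hnd hev
    by_cases hTe : T = ∅
    · exact ⟨0, by simp, by simp [hTe]⟩
    · obtain ⟨S, hST, hSC⟩ := exists_cycle_finset T hnd hev (Finset.nonempty_iff_ne_empty.2 hTe)
      have hS3 := hSC.three_le_card
      have hScard : S.card ≤ T.card := Finset.card_le_card hST
      have hcard : (T \ S).card ≤ n := by rw [Finset.card_sdiff_of_subset hST]; omega
      have heven : ∀ x, Even (degF (T \ S) x) := by
        intro x
        rw [degF_sdiff S T hST x]
        obtain ⟨p, hp⟩ := hev x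
        obtain ⟨q, hq⟩ := hSC.degF_even x
        have hle : degF S x ≤ degF T x := by
          rw [degF_eq_card_filter, degF_eq_card_filter]
          exact Finset.card_le_card (Finset.filter_subset_filter _ hST)
        exact ⟨p - q, by omega⟩
      obtain ⟨F, hF1, hF2⟩ := ih (T \ S) hcard
        (fun e he => hnd e (Finset.mem_sdiff.1 he).1) heven
      refine ⟨S ::ₘ F, ?_, ?_⟩
      · intro S' hS'
        rcases Multiset.mem_cons.1 hS' with rfl | h
        · exact hSC
        · exact hF1 _ h
      · rw [Multiset.map_cons, Multiset.sum_cons, hF2, Finset.sdiff_val]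
        exact add_tsub_cancel_of_le (Finset.val_le_iff.2 hST)

lemma disjoint_cycles_not_cycle (F : Multiset (Finset (Sym2 V)))
    (hcyc : ∀ S ∈ F, IsCyc S)
    (hdisj : ∀ a ∈ F, ∀ b ∈ F.erase a, Disjoint a b)
    (hF2 : 2 ≤ Multiset.card F)
    {S₀ : Finset (Sym2 V)} (hS₀ : IsCyc S₀)
    (hmem : ∀ e : Sym2 V, e ∈ S₀ ↔ ∃ S ∈ F, e ∈ S) : False := by
  classical
  have hcount : ∀ e : Sym2 V, F.countP (fun S => e ∈ S) ≤ 1 := by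
    intro e
    by_contra hgt
    push_neg at hgt
    obtain ⟨a, ha, hea⟩ := Multiset.countP_pos.1 (by omega : 0 < F.countP (fun S => e ∈ S))
    obtain ⟨F₁, rfl⟩ := Multiset.exists_cons_of_mem ha
    rw [Multiset.countP_cons, if_pos hea] at hgt
    obtain ⟨b, hb, heb⟩ := Multiset.countP_pos.1 (by omega : 0 < F₁.countP (fun S => e ∈ S))
    have hd := hdisj a (Multiset.mem_cons_self a F₁) b (by rwa [Multiset.erase_cons_head])
    exact Finset.disjoint_left.1 hd hea heb
  have hval : S₀.val = (F.map Finset.val).sum := by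
    apply Multiset.ext.2
    intro e
    rw [← countP_mem_eq_count_sum, count_val]
    split
    · rename_i hmem'
      obtain ⟨S, hS, heS⟩ := (hmem e).1 hmem'
      have hpos : 0 < F.countP (fun S => e ∈ S) := Multiset.countP_pos.2 ⟨S, hS, heS⟩
      have := hcount e
      omega
    · rename_i hmem'
      have : ¬ (0 < F.countP (fun S => e ∈ S)) :=
        fun hp => hmem' ((hmem e).2 (Multiset.countP_pos.1 hp))
      omega
  have hS₀' := hS₀
  obtain ⟨m, h, hm3, hinj, hSval⟩ := hS₀'
  have hmpos : 0 < m := by omega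
  set E : ℕ → Sym2 V := fun i =>
    s(h ⟨i % m, Nat.mod_lt _ hmpos⟩, h ⟨(i + 1) % m, Nat.mod_lt _ hmpos⟩) with hE
  have hEmem : ∀ i : ℕ, E i ∈ S₀ := by
    intro i
    rw [Finset.mem_def, hSval]
    have hnxt : nxt (⟨i % m, Nat.mod_lt _ hmpos⟩ : Fin m) = ⟨(i + 1) % m, Nat.mod_lt _ hmpos⟩ := by
      apply Fin.ext
      show (i % m + 1) % m = (i + 1) % m
      rw [Nat.mod_add_mod]
    have := edge_mem_cycleEdges h (⟨i % m, Nat.mod_lt _ hmpos⟩ : Fin m)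
    rwa [hnxt] at this
  have hdegsum : ∀ x : V, (F.map (fun S => degF S x)).sum = degF S₀ x := by
    intro x
    rw [degF, hval]
    exact (degM_map_sum F x).symm
  obtain ⟨A, hA, hA0⟩ := (hmem (E 0)).1 (hEmem 0)
  have hallA : ∀ i : ℕ, i < m → E i ∈ A := by
    intro i
    induction i with
    | zero => intro _; exact hA0
    | succ i ihi =>
      intro hi1
      have hEi : E i ∈ A := ihi (by omega)
      obtain ⟨B, hB, hEB⟩ := (hmem (E (i + 1))).1 (hEmem (i + 1))
      by_cases hABeq : B = A
      · exact hABeq ▸ hEB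
      · exfalso
        have hxEi : h ⟨(i + 1) % m, Nat.mod_lt _ hmpos⟩ ∈ E i := Sym2.mem_iff.2 (Or.inr rfl)
        have hxEi1 : h ⟨(i + 1) % m, Nat.mod_lt _ hmpos⟩ ∈ E (i + 1) :=
          Sym2.mem_iff.2 (Or.inl rfl)
        set x := h ⟨(i + 1) % m, Nat.mod_lt _ hmpos⟩ with hx
        have hdA : degF A x = 2 := (hcyc A hA).degF_eq_two hEi hxEi
        have hdB : degF B x = 2 := (hcyc B hB).degF_eq_two hEB hxEi1
        obtain ⟨F₁, hF₁⟩ := Multiset.exists_cons_of_mem hA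
        have hBF₁ : B ∈ F₁ := by
          have hBe : B ∈ F.erase A := (Multiset.mem_erase_of_ne hABeq).2 hB
          rwa [hF₁, Multiset.erase_cons_head] at hBe
        obtain ⟨F₂, hF₂⟩ := Multiset.exists_cons_of_mem hBF₁
        have hsum := hdegsum x
        rw [hF₁, hF₂, Multiset.map_cons, Multiset.sum_cons, Multiset.map_cons,
          Multiset.sum_cons] at hsum
        have hd0 : degF S₀ x = 2 := hS₀.degF_eq_two (hEmem i) hxEi
        omega
  have hsub : ∀ e ∈ S₀, e ∈ A := by
    intro e he
    have he' : e ∈ S₀.val := he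
    rw [hSval] at he'
    obtain ⟨i, rfl⟩ := mem_cycleEdges.1 he'
    have h1 : (⟨(i : ℕ) % m, Nat.mod_lt _ hmpos⟩ : Fin m) = i :=
      Fin.ext (Nat.mod_eq_of_lt i.isLt)
    have h2 : (⟨((i : ℕ) + 1) % m, Nat.mod_lt _ hmpos⟩ : Fin m) = nxt i := Fin.ext rfl
    have hEi : E (i : ℕ) = s(h i, h (nxt i)) := by
      show s(h ⟨(i : ℕ) % m, Nat.mod_lt _ hmpos⟩, h ⟨((i : ℕ) + 1) % m, Nat.mod_lt _ hmpos⟩) = _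
      rw [h1, h2]
    rw [← hEi]
    exact hallA (i : ℕ) i.isLt
  obtain ⟨F₁, hF₁⟩ := Multiset.exists_cons_of_mem hA
  have hcard₁ : 0 < Multiset.card F₁ := by
    have := congrArg Multiset.card hF₁
    rw [Multiset.card_cons] at this
    omega
  obtain ⟨B₂, hB₂⟩ := Multiset.card_pos_iff_exists_mem.1 hcard₁
  have hB₂F : B₂ ∈ F := by rw [hF₁]; exact Multiset.mem_cons_of_mem hB₂
  have hB₂3 := (hcyc B₂ hB₂F).three_le_card
  obtain ⟨e', he'⟩ := Finset.card_pos.1 (by omega : 0 < B₂.card)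
  have he'A : e' ∈ A := hsub e' ((hmem e').2 ⟨B₂, hB₂F, he'⟩)
  have hdisjAB : Disjoint A B₂ :=
    hdisj A hA B₂ (by rw [hF₁, Multiset.erase_cons_head]; exact hB₂)
  exact Finset.disjoint_left.1 hdisjAB he'A he'

/-- Main combinatorial bound: cycles whose symmetric difference is a single cycle. -/
lemma claimA : ∀ (n : ℕ) (F : Multiset (Finset (Sym2 V))) (S₀ : Finset (Sym2 V)),
    (F.map Finset.card).sum ≤ n → (∀ S ∈ F, IsCyc S) → IsCyc S₀ →
    (∀ e : Sym2 V, e ∈ S₀ ↔ Odd (F.countP (fun S => e ∈ S))) →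
    S₀.card + 2 * Multiset.card F ≤ (F.map Finset.card).sum + 2 := by
  intro n
  induction n using Nat.strong_induction_on with
  | _ n ih =>
  intro F S₀ hW hcyc hS₀ hpar
  classical
  by_cases hQ : ∃ a ∈ F, ∃ b ∈ F.erase a, ¬ Disjoint a b
  · obtain ⟨a, ha, b, hb, hndz⟩ := hQ
    obtain ⟨F₁, hF₁⟩ := Multiset.exists_cons_of_mem ha
    have hbF₁ : b ∈ F₁ := by rw [hF₁, Multiset.erase_cons_head] at hb; exact hb
    obtain ⟨F₂, hF₂⟩ := Multiset.exists_cons_of_mem hbF₁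
    have hFeq : F = a ::ₘ b ::ₘ F₂ := by rw [hF₁, hF₂]
    have ha3 := (hcyc a ha).three_le_card
    have hbF : b ∈ F := by rw [hFeq]; exact Multiset.mem_cons_of_mem (Multiset.mem_cons_self b F₂)
    have hb3 := (hcyc b hbF).three_le_card
    by_cases hab : a = b
    · -- identical pair: drop both
      have hpar₂ : ∀ e : Sym2 V, e ∈ S₀ ↔ Odd (F₂.countP (fun S => e ∈ S)) := by
        intro e
        rw [hpar e, hFeq, Multiset.countP_cons, Multiset.countP_cons, ← hab]
        rw [Nat.odd_iff, Nat.odd_iff]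
        split_ifs <;> omega
      have hW₂ : (F₂.map Finset.card).sum < n := by
        rw [hFeq, Multiset.map_cons, Multiset.sum_cons, Multiset.map_cons,
          Multiset.sum_cons] at hW
        omega
      have hcyc₂ : ∀ S ∈ F₂, IsCyc S := fun S hS => hcyc S
        (by rw [hFeq]; exact Multiset.mem_cons_of_mem (Multiset.mem_cons_of_mem hS))
      have hIH := ih _ hW₂ F₂ S₀ (le_refl _) hcyc₂ hS₀ hpar₂
      rw [hFeq, Multiset.map_cons, Multiset.sum_cons, Multiset.map_cons, Multiset.sum_cons,
        Multiset.card_cons, Multiset.card_cons]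
      omega
    · -- overlapping distinct cycles: replace by their symmetric difference
      have hcap : 0 < (a ∩ b).card := by
        rw [Finset.card_pos]
        obtain ⟨e, he1, he2⟩ := Finset.not_disjoint_iff.1 hndz
        exact ⟨e, Finset.mem_inter.2 ⟨he1, he2⟩⟩
      have hdne : symmDiff a b ≠ ∅ := by
        intro hempty
        exact hab (symmDiff_eq_bot.1 (by rw [hempty]; rfl))
      have hnd' : ∀ e ∈ symmDiff a b, ¬ e.IsDiag := by
        intro e he
        rcases Finset.mem_symmDiff.1 he with ⟨h1, _⟩ | ⟨h1, _⟩
        · exact (hcyc a ha).nondiag e h1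
        · exact (hcyc b hbF).nondiag e h1
      have hev' : ∀ x, Even (degF (symmDiff a b) x) := fun x =>
        degF_symmDiff_even a b ((hcyc a ha).degF_even) ((hcyc b hbF).degF_even) x
      obtain ⟨L, hL1, hL2⟩ := cycle_decomp ((symmDiff a b).card) (symmDiff a b)
        (le_refl _) hnd' hev'
      have hLW : (L.map Finset.card).sum = (symmDiff a b).card := by
        have hcv := congrArg Multiset.card hL2
        rw [card_val_sum] at hcv
        exact hcv
      have hLne : 0 < Multiset.card L := by
        rcases Nat.eq_zero_or_pos (Multiset.card L) with h0 | h0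
        · exfalso
          have : L = 0 := Multiset.card_eq_zero.1 h0
          rw [this] at hL2
          simp at hL2
          exact hdne (Finset.val_eq_zero.1 hL2.symm)
        · exact h0
      have hcnt : ∀ e : Sym2 V, L.countP (fun S => e ∈ S)
          = if e ∈ symmDiff a b then 1 else 0 := by
        intro e
        rw [countP_mem_eq_count_sum, hL2, count_val]
      have hpar' : ∀ e : Sym2 V, e ∈ S₀ ↔ Odd ((L + F₂).countP (fun S => e ∈ S)) := by
        intro e
        rw [hpar e, hFeq, Multiset.countP_cons, Multiset.countP_cons, Multiset.countP_add,
          hcnt e, Nat.odd_iff, Nat.odd_iff]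
        rcases em (e ∈ a) with h1 | h1 <;> rcases em (e ∈ b) with h2 | h2
        · have h3 : e ∉ symmDiff a b := by rw [Finset.mem_symmDiff]; tauto
          rw [if_pos h1, if_pos h2, if_neg h3]; omega
        · have h3 : e ∈ symmDiff a b := by rw [Finset.mem_symmDiff]; tauto
          rw [if_pos h1, if_neg h2, if_pos h3]; omega
        · have h3 : e ∈ symmDiff a b := by rw [Finset.mem_symmDiff]; tauto
          rw [if_neg h1, if_pos h2, if_pos h3]; omega
        · have h3 : e ∉ symmDiff a b := by rw [Finset.mem_symmDiff]; tauto
          rw [if_neg h1, if_neg h2, if_neg h3]; omega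
      have hcyc' : ∀ S ∈ L + F₂, IsCyc S := by
        intro S hS
        rcases Multiset.mem_add.1 hS with hh | hh
        · exact hL1 S hh
        · exact hcyc S
            (by rw [hFeq]; exact Multiset.mem_cons_of_mem (Multiset.mem_cons_of_mem hh))
      have hWeq : (F.map Finset.card).sum = a.card + b.card + (F₂.map Finset.card).sum := by
        rw [hFeq, Multiset.map_cons, Multiset.sum_cons, Multiset.map_cons, Multiset.sum_cons]
        omega
      have hW' : ((L + F₂).map Finset.card).sum
          = (symmDiff a b).card + (F₂.map Finset.card).sum := by
        rw [Multiset.map_add, Multiset.sum_add, hLW]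
      have hsd := symmDiff_card a b
      have hlt : ((L + F₂).map Finset.card).sum < n := by omega
      have hIH := ih _ hlt (L + F₂) S₀ (le_refl _) hcyc' hS₀ hpar'
      have hcards : Multiset.card (L + F₂) = Multiset.card L + Multiset.card F₂ :=
        Multiset.card_add L F₂
      have hcardF : Multiset.card F = 2 + Multiset.card F₂ := by
        rw [hFeq, Multiset.card_cons, Multiset.card_cons]; omega
      omega
  · push_neg at hQ
    rcases Nat.lt_or_ge (Multiset.card F) 2 with hc | hc
    · rcases Nat.lt_or_ge (Multiset.card F) 1 with hc0 | hc1
      · exfalso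
        have hF0 : F = 0 := Multiset.card_eq_zero.1 (by omega)
        have h3 := hS₀.three_le_card
        obtain ⟨e, he⟩ := Finset.card_pos.1 (by omega : 0 < S₀.card)
        have hodd := (hpar e).1 he
        rw [hF0, Multiset.countP_zero] at hodd
        simp at hodd
      · have hF1 : Multiset.card F = 1 := by omega
        obtain ⟨a, rfl⟩ := Multiset.card_eq_one.1 hF1
        have hcnt1 : ∀ e : Sym2 V, ({a} : Multiset (Finset (Sym2 V))).countP (fun S => e ∈ S)
            = if e ∈ a then 1 else 0 := by
          intro e
          rw [show ({a} : Multiset (Finset (Sym2 V))) = a ::ₘ 0 from rfl,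
            Multiset.countP_cons, Multiset.countP_zero]
          omega
        have hSa : S₀ = a := by
          ext e
          rw [hpar e, hcnt1 e]
          split_ifs with hh
          · simp [hh]
          · simp [hh, Nat.odd_iff]
        rw [hSa]
        simp
    · exfalso
      have hcount : ∀ e : Sym2 V, F.countP (fun S => e ∈ S) ≤ 1 := by
        intro e
        by_contra hgt
        push_neg at hgt
        obtain ⟨a, ha, hea⟩ := Multiset.countP_pos.1 (by omega : 0 < F.countP (fun S => e ∈ S))
        obtain ⟨F₁, rfl⟩ := Multiset.exists_cons_of_mem ha
        rw [Multiset.countP_cons, if_pos hea] at hgt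
        obtain ⟨b, hb, heb⟩ := Multiset.countP_pos.1 (by omega : 0 < F₁.countP (fun S => e ∈ S))
        have hd := hQ a (Multiset.mem_cons_self a F₁) b (by rwa [Multiset.erase_cons_head])
        exact Finset.disjoint_left.1 hd hea heb
      have hmem : ∀ e : Sym2 V, e ∈ S₀ ↔ ∃ S ∈ F, e ∈ S := by
        intro e
        rw [hpar e, Nat.odd_iff]
        constructor
        · intro h1
          exact Multiset.countP_pos.1 (by omega)
        · intro h1
          have hp := Multiset.countP_pos.2 h1
          have := hcount e
          omega
      exact disjoint_cycles_not_cycle F hcyc hQ hc hS₀ hmem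

end SecC3

section SecD
variable {V : Type*} [Fintype V] [DecidableEq V]

lemma count_list_sum {α : Type*} [DecidableEq α] (e : α) (l : List (Multiset α)) :
    Multiset.count e l.sum = (l.map (fun C => Multiset.count e C)).sum := by
  induction l with
  | nil => simp
  | cons h t ih => simp [Multiset.count_add, ih]

lemma card_list_sum {α : Type*} (l : List (Multiset α)) :
    Multiset.card l.sum = (l.map (fun C => Multiset.card C)).sum := by
  induction l with
  | nil => simp
  | cons h t ih => simp [ih]

lemma two_mul_length_le_sum (l : List ℕ) (h : ∀ x ∈ l, 2 ≤ x) : 2 * l.length ≤ l.sum := by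
  induction l with
  | nil => simp
  | cons a t ih =>
    have h1 := h a (by simp)
    have h2 := ih (fun x hx => h x (by simp [hx]))
    simp only [List.length_cons, List.sum_cons]
    omega

lemma even_multiset_sum (s : Multiset ℕ) (h : ∀ x ∈ s, Even x) : Even s.sum := by
  induction s using Multiset.induction with
  | empty => simp
  | cons a s ih =>
    rw [Multiset.sum_cons]
    exact (h a (Multiset.mem_cons_self a s)).add
      (ih (fun x hx => h x (Multiset.mem_cons_of_mem hx)))

lemma sum_map_ite {α : Type*} (s : Multiset α) (p : α → Prop) [DecidablePred p] :
    (s.map (fun a => if p a then (1 : ℕ) else 0)).sum = s.countP p := by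
  induction s using Multiset.induction with
  | empty => simp
  | cons a s ih =>
    rw [Multiset.map_cons, Multiset.sum_cons, ih, Multiset.countP_cons]
    omega

lemma swap_sum {α ι : Type*} (t : Finset ι) (s : Multiset α) (g : α → ι → ℕ) :
    (∑ i ∈ t, (s.map (fun a => g a i)).sum) = (s.map (fun a => ∑ i ∈ t, g a i)).sum := by
  induction s using Multiset.induction with
  | empty => simp
  | cons a s ih =>
    simp only [Multiset.map_cons, Multiset.sum_cons]
    rw [Finset.sum_add_distrib, ih]

lemma toFinset_val_of_nodup {α : Type*} [DecidableEq α] {s : Multiset α} (h : s.Nodup) :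
    s.toFinset.val = s := by
  rw [Multiset.toFinset_val, Multiset.dedup_eq_self.2 h]

end SecD


end Aux

end CycleDecompBipartite

open CycleDecompBipartite in
set_option maxHeartbeats 1000000 in
/-- necessary conditions: if `λ K_{v,u}` has an `(M)`-cycle decomposition for a
non-decreasing sequence `M` of positive even integers, then (a) `m_t ≤ 2 min(v,u)`,
(b) `λv ≡ λu ≡ 0 (mod 2)`, (c) if `λ` is even then `t ≤ (λ/2)vu - m_t + 2`
(stated as `2t + 2m_t ≤ λvu + 4`), and (d) if `λ` is odd then `2 ν₂(M) ≤ (λ-1)vu`. -/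
theorem necessary_conditions (lam v u : ℕ) (hlam : 0 < lam) (hv : 0 < v) (hu : 0 < u)
    (M : List ℕ) (hne : M ≠ []) (hsorted : M.Pairwise (· ≤ ·))
    (hM : ∀ m ∈ M, 0 < m ∧ Even m)
    (hdec : ∃ Cs : List (Multiset (Sym2 (Fin v ⊕ Fin u))),
      List.Forall₂ IsCycleM M Cs ∧ Cs.sum = lamK lam v u) :
    M.getLast hne ≤ 2 * min v u ∧
      (Even (lam * v) ∧ Even (lam * u)) ∧
      (Even lam → 2 * M.length + 2 * M.getLast hne ≤ lam * v * u + 4) ∧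
      (Odd lam → 2 * M.count 2 ≤ (lam - 1) * v * u) := by
  classical
  obtain ⟨Cs, hF2, hsum⟩ := hdec
  have hlen : M.length = Cs.length := hF2.length_eq
  have hzip : ∀ q ∈ M.zip Cs, IsCycleM q.1 q.2 := by
    rintro ⟨a, b⟩ hq
    exact (List.forall₂_iff_zip.1 hF2).2 hq
  have hfst : (M.zip Cs).map Prod.fst = M := List.map_fst_zip (le_of_eq hlen)
  have hsnd : (M.zip Cs).map Prod.snd = Cs := List.map_snd_zip (ge_of_eq hlen)
  have hcross : ∀ C ∈ Cs, ∀ e ∈ C,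
      ∃ p : Fin v × Fin u, s(Sum.inl p.1, Sum.inr p.2) = e := by
    intro C hC e he
    have h1 : e ∈ Cs.sum := mem_list_sum.2 ⟨C, hC, he⟩
    rw [hsum] at h1
    exact (mem_lamK (by omega)).1 h1
  -- Part (a)
  have parta : ∀ mm ∈ M, mm ≤ 2 * min v u := by
    intro mm hmm
    obtain ⟨q, hq, hq1⟩ : ∃ q ∈ M.zip Cs, q.1 = mm := by
      rw [← hfst] at hmm
      obtain ⟨q, hq, h⟩ := List.mem_map.1 hmm
      exact ⟨q, hq, h⟩
    obtain ⟨hm2, f, hfinj, hCval⟩ := hzip q hq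
    rw [← hq1]
    have hqCs : q.2 ∈ Cs := by
      rw [← hsnd]; exact List.mem_map_of_mem hq
    apply cycle_le_two_min hv hu hm2 hfinj
    intro i
    have hedge := edge_mem_cycleEdges f i
    rw [← hCval] at hedge
    obtain ⟨p, hp⟩ := hcross q.2 hqCs _ hedge
    rcases Sym2.eq_iff.1 hp with ⟨h1, h2⟩ | ⟨h1, h2⟩
    · rw [← h1, ← h2]; simp
    · rw [← h1, ← h2]; simp
  -- Part (b)
  have hevens : ∀ x : Fin v ⊕ Fin u, Even (degM Cs.sum x) := by
    intro x
    rw [degM_list_sum]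
    apply even_list_sum
    intro nn hnn
    obtain ⟨C, hC, rfl⟩ := List.mem_map.1 hnn
    obtain ⟨q, hq, hq2⟩ : ∃ q ∈ M.zip Cs, q.2 = C := by
      rw [← hsnd] at hC
      obtain ⟨q, hq, h2⟩ := List.mem_map.1 hC
      exact ⟨q, hq, h2⟩
    obtain ⟨hq1, f, hfi, hCE⟩ := hzip q hq
    rw [← hq2, hCE, degM_cycleEdges hq1 hfi]
    split <;> simp
  have partb1 : Even (lam * u) := by
    have h1 := degM_lamK_inl (lam := lam) (v := v) (u := u) ⟨0, hv⟩
    rw [← hsum] at h1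
    rw [← h1]
    exact hevens _
  have partb2 : Even (lam * v) := by
    have h1 := degM_lamK_inr (lam := lam) (v := v) (u := u) ⟨0, hu⟩
    rw [← hsum] at h1
    rw [← h1]
    exact hevens _
  -- total sum of M
  have hMsum : M.sum = lam * (v * u) := by
    have h1 : Multiset.card Cs.sum = lam * (v * u) := by rw [hsum]; exact card_lamK
    rw [card_list_sum, ← hsnd, List.map_map] at h1
    have h2 : ((M.zip Cs).map ((fun C => Multiset.card C) ∘ Prod.snd)).sum
        = ((M.zip Cs).map Prod.fst).sum := by
      congr 1
      apply List.map_congr_left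
      intro q hq
      obtain ⟨hq1, f, hfi, hCE⟩ := hzip q hq
      show Multiset.card q.2 = q.1
      rw [hCE, card_cycleEdges]
    rw [h2, hfst] at h1
    exact h1
  have hassoc : lam * v * u = lam * (v * u) := Nat.mul_assoc lam v u
  refine ⟨parta _ (List.getLast_mem hne), ⟨partb2, partb1⟩, ?_, ?_⟩
  -- Part (c)
  · intro hlamE
    by_cases hmt3 : M.getLast hne < 3
    · have h2le : ∀ x ∈ M, 2 ≤ x := by
        intro x hx
        obtain ⟨hpos, ⟨r, hr⟩⟩ := hM x hx
        omega
      have hlb := two_mul_length_le_sum M h2le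
      have hmt2 := h2le _ (List.getLast_mem hne)
      omega
    · push_neg at hmt3
      obtain ⟨qt, hqtzl, hqt1⟩ : ∃ q ∈ M.zip Cs, q.1 = M.getLast hne := by
        have hmm : M.getLast hne ∈ List.map Prod.fst (M.zip Cs) := by
          rw [hfst]; exact List.getLast_mem hne
        obtain ⟨q, hq, h⟩ := List.mem_map.1 hmm
        exact ⟨q, hq, h⟩
      set Zm : Multiset (ℕ × Multiset (Sym2 (Fin v ⊕ Fin u))) := ↑(M.zip Cs) with hZm
      have hqtZm : qt ∈ Zm := Multiset.mem_coe.2 hqtzl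
      obtain ⟨Z₁, hZ₁⟩ := Multiset.exists_cons_of_mem hqtZm
      have hZ₁mem : ∀ q ∈ Z₁, q ∈ M.zip Cs := by
        intro q hq
        have h1 : q ∈ Zm := by rw [hZ₁]; exact Multiset.mem_cons_of_mem hq
        exact Multiset.mem_coe.1 h1
      have hlongF : ∀ q ∈ M.zip Cs, ¬ q.1 = 2 →
          IsCyc q.2.toFinset ∧ q.2.toFinset.val = q.2 ∧ q.2.toFinset.card = q.1 := by
        intro q hq hq2
        obtain ⟨hqm, f, hfi, hCE⟩ := hzip q hq
        have h3 : 3 ≤ q.1 := by omega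
        have hnd : q.2.Nodup := by rw [hCE]; exact cycleEdges_nodup h3 hfi
        have hval : q.2.toFinset.val = q.2 := toFinset_val_of_nodup hnd
        refine ⟨⟨q.1, f, h3, hfi, by rw [hval, hCE]⟩, hval, ?_⟩
        rw [Finset.card_def, hval, hCE, card_cycleEdges]
      obtain ⟨hS₀cyc, hS₀val, hS₀card⟩ := hlongF qt hqtzl (by omega)
      have hFcyc : ∀ S ∈ (Z₁.filter (fun q => ¬ q.1 = 2)).map (fun q => q.2.toFinset),
          IsCyc S := by
        intro S hS
        obtain ⟨q, hq, rfl⟩ := Multiset.mem_map.1 hS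
        have hq' := Multiset.mem_filter.1 hq
        exact (hlongF q (hZ₁mem q hq'.1) hq'.2).1
      have hpar : ∀ e : Sym2 (Fin v ⊕ Fin u), e ∈ qt.2.toFinset ↔
          Odd (((Z₁.filter (fun q => ¬ q.1 = 2)).map (fun q => q.2.toFinset)).countP
            (fun S => e ∈ S)) := by
        intro e
        have h1 : Multiset.count e (lamK lam v u)
            = (Zm.map (fun q => Multiset.count e q.2)).sum := by
          rw [← hsum, count_list_sum, ← hsnd, List.map_map, hZm, Multiset.map_coe,
            Multiset.sum_coe]
          rfl
        have hsplitZ : Z₁.map (fun q => Multiset.count e q.2)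
            = (Z₁.filter (fun q => q.1 = 2)).map (fun q => Multiset.count e q.2)
              + (Z₁.filter (fun q => ¬ q.1 = 2)).map (fun q => Multiset.count e q.2) := by
          rw [← Multiset.map_add, Multiset.filter_add_not]
        have hctot : Multiset.count e (lamK lam v u)
            = Multiset.count e qt.2
              + ((Z₁.filter (fun q => q.1 = 2)).map (fun q => Multiset.count e q.2)).sum
              + ((Z₁.filter (fun q => ¬ q.1 = 2)).map (fun q => Multiset.count e q.2)).sum := by
          rw [h1, hZ₁, Multiset.map_cons, Multiset.sum_cons, hsplitZ, Multiset.sum_add]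
          omega
        have h2even : Even (((Z₁.filter (fun q => q.1 = 2)).map
            (fun q => Multiset.count e q.2)).sum) := by
          apply even_multiset_sum
          intro x hx
          obtain ⟨q, hq, rfl⟩ := Multiset.mem_map.1 hx
          have hq' := Multiset.mem_filter.1 hq
          obtain ⟨n, C⟩ := q
          have hn2 : n = 2 := hq'.2
          subst hn2
          obtain ⟨hqm, f, hfi, hCE⟩ := hzip _ (hZ₁mem _ hq'.1)
          show Even (Multiset.count e C)
          rw [show C = cycleEdges f from hCE, count_cycleEdges_two]
          split <;> simp
        have hlongcnt : (Z₁.filter (fun q => ¬ q.1 = 2)).map (fun q => Multiset.count e q.2)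
            = (Z₁.filter (fun q => ¬ q.1 = 2)).map
                (fun q => if e ∈ q.2.toFinset then 1 else 0) := by
          apply Multiset.map_congr rfl
          intro q hq
          have hq' := Multiset.mem_filter.1 hq
          obtain ⟨hIC, hval, hcard⟩ := hlongF q (hZ₁mem q hq'.1) hq'.2
          conv_lhs => rw [← hval]
          rw [count_val]
        have hFcount : ((Z₁.filter (fun q => ¬ q.1 = 2)).map (fun q => q.2.toFinset)).countP
            (fun S => e ∈ S)
            = ((Z₁.filter (fun q => ¬ q.1 = 2)).map
                (fun q => if e ∈ q.2.toFinset then (1:ℕ) else 0)).sum := by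
          rw [sum_map_ite, Multiset.countP_map, Multiset.countP_eq_card_filter]
        have hqtcnt : Multiset.count e qt.2 = if e ∈ qt.2.toFinset then 1 else 0 := by
          conv_lhs => rw [← hS₀val]
          rw [count_val]
        have hKeven : Even (Multiset.count e (lamK lam v u)) := by
          by_cases hin : e ∈ lamK lam v u
          · obtain ⟨p, rfl⟩ := (mem_lamK (by omega)).1 hin
            rw [count_lamK_cross]
            exact hlamE
          · rw [Multiset.count_eq_zero_of_notMem hin]
            simp
        rw [hlongcnt, ← hFcount, hqtcnt] at hctot
        obtain ⟨r2, hr2⟩ := h2even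
        obtain ⟨rk, hrk⟩ := hKeven
        rw [Nat.odd_iff]
        by_cases hmemS : e ∈ qt.2.toFinset
        · rw [if_pos hmemS] at hctot
          constructor
          · intro _; omega
          · intro _; exact hmemS
        · rw [if_neg hmemS] at hctot
          constructor
          · intro hh; exact absurd hh hmemS
          · intro hh; exact absurd hh (by omega)
      have hW := claimA ((((Z₁.filter (fun q => ¬ q.1 = 2)).map
          (fun q => q.2.toFinset)).map Finset.card).sum)
        ((Z₁.filter (fun q => ¬ q.1 = 2)).map (fun q => q.2.toFinset)) qt.2.toFinset
        (le_refl _) hFcyc hS₀cyc hpar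
      have hcardtoF : (Z₁.filter (fun q => ¬ q.1 = 2)).map (fun q => q.2.toFinset.card)
          = (Z₁.filter (fun q => ¬ q.1 = 2)).map (fun q => q.1) :=
        Multiset.map_congr rfl (fun q hq =>
          (hlongF q (hZ₁mem q (Multiset.mem_filter.1 hq).1) (Multiset.mem_filter.1 hq).2).2.2)
      have hFW : (((Z₁.filter (fun q => ¬ q.1 = 2)).map
          (fun q => q.2.toFinset)).map Finset.card).sum
          = ((Z₁.filter (fun q => ¬ q.1 = 2)).map (fun q => q.1)).sum := by
        rw [Multiset.map_map]
        exact congrArg Multiset.sum hcardtoF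
      have hFk : Multiset.card ((Z₁.filter (fun q => ¬ q.1 = 2)).map (fun q => q.2.toFinset))
          = Multiset.card (Z₁.filter (fun q => ¬ q.1 = 2)) := Multiset.card_map _ _
      have h2sum : ((Z₁.filter (fun q => q.1 = 2)).map (fun q => q.1)).sum
          = 2 * Multiset.card (Z₁.filter (fun q => q.1 = 2)) := by
        have hconst : (Z₁.filter (fun q => q.1 = 2)).map (fun q => q.1)
            = (Z₁.filter (fun q => q.1 = 2)).map (fun _ => 2) :=
          Multiset.map_congr rfl (fun q hq => (Multiset.mem_filter.1 hq).2)
        rw [hconst, Multiset.map_const', Multiset.sum_replicate, smul_eq_mul]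
        omega
      have hMsum2 : M.sum = qt.1
          + ((Z₁.filter (fun q => q.1 = 2)).map (fun q => q.1)).sum
          + ((Z₁.filter (fun q => ¬ q.1 = 2)).map (fun q => q.1)).sum := by
        have hcoe : M.sum = (Zm.map (fun q => q.1)).sum := by
          rw [← hfst, hZm, Multiset.map_coe, Multiset.sum_coe]
        rw [hcoe, hZ₁, Multiset.map_cons, Multiset.sum_cons]
        have hsplit : Z₁.map (fun q => q.1)
            = (Z₁.filter (fun q => q.1 = 2)).map (fun q => q.1)
              + (Z₁.filter (fun q => ¬ q.1 = 2)).map (fun q => q.1) := by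
          rw [← Multiset.map_add, Multiset.filter_add_not]
        rw [hsplit, Multiset.sum_add]
        omega
      have hlen2 : M.length = 1 + Multiset.card (Z₁.filter (fun q => q.1 = 2))
          + Multiset.card (Z₁.filter (fun q => ¬ q.1 = 2)) := by
        have h1 : M.length = Multiset.card Zm := by
          rw [hZm, Multiset.coe_card, List.length_zip]
          omega
        have hc := congrArg Multiset.card (Multiset.filter_add_not (fun q => q.1 = 2) Z₁)
        rw [Multiset.card_add] at hc
        rw [h1, hZ₁, Multiset.card_cons]
        omega
      rw [hFW, hFk, hS₀card, hqt1] at hW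
      omega
  -- Part (d)
  · intro hlamO
    have hlo : lam % 2 = 1 := Nat.odd_iff.1 hlamO
    set Zm : Multiset (ℕ × Multiset (Sym2 (Fin v ⊕ Fin u))) := ↑(M.zip Cs) with hZm
    have hZmem : ∀ q ∈ Zm, q ∈ M.zip Cs := fun q hq => Multiset.mem_coe.1 hq
    have hcnt_tot : ∀ p : Fin v × Fin u,
        (Zm.map (fun q => Multiset.count s(Sum.inl p.1, Sum.inr p.2) q.2)).sum = lam := by
      intro p
      have h1 : Multiset.count s(Sum.inl p.1, Sum.inr p.2) (lamK lam v u)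
          = (Zm.map (fun q => Multiset.count s(Sum.inl p.1, Sum.inr p.2) q.2)).sum := by
        rw [← hsum, count_list_sum, ← hsnd, List.map_map, hZm, Multiset.map_coe,
          Multiset.sum_coe]
        rfl
      rw [← h1, count_lamK_cross]
    have hsplit : ∀ g : ℕ × Multiset (Sym2 (Fin v ⊕ Fin u)) → ℕ,
        (Zm.map g).sum = ((Zm.filter (fun q => q.1 = 2)).map g).sum
          + ((Zm.filter (fun q => ¬ q.1 = 2)).map g).sum := by
      intro g
      rw [← Multiset.sum_add, ← Multiset.map_add, Multiset.filter_add_not]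
    have hn2le : ∀ p : Fin v × Fin u,
        ((Zm.filter (fun q => q.1 = 2)).map
          (fun q => Multiset.count s(Sum.inl p.1, Sum.inr p.2) q.2)).sum ≤ lam - 1 := by
      intro p
      have h1 := hcnt_tot p
      rw [hsplit] at h1
      have h2 : Even (((Zm.filter (fun q => q.1 = 2)).map
          (fun q => Multiset.count s(Sum.inl p.1, Sum.inr p.2) q.2)).sum) := by
        apply even_multiset_sum
        intro x hx
        obtain ⟨q, hq, rfl⟩ := Multiset.mem_map.1 hx
        have hq' := Multiset.mem_filter.1 hq
        obtain ⟨n, C⟩ := q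
        have hn2 : n = 2 := hq'.2
        subst hn2
        obtain ⟨hqm, f, hfi, hCE⟩ := hzip _ (hZmem _ hq'.1)
        show Even (Multiset.count _ C)
        rw [show C = cycleEdges f from hCE, count_cycleEdges_two]
        split <;> simp
      obtain ⟨r, hr⟩ := h2
      omega
    have hswap : (∑ p : Fin v × Fin u, ((Zm.filter (fun q => q.1 = 2)).map
          (fun q => Multiset.count s(Sum.inl p.1, Sum.inr p.2) q.2)).sum)
        = ((Zm.filter (fun q => q.1 = 2)).map
            (fun q => ∑ p : Fin v × Fin u,
              Multiset.count s(Sum.inl p.1, Sum.inr p.2) q.2)).sum :=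
      by apply swap_sum
    have hinner : ∀ q ∈ Zm.filter (fun q => q.1 = 2),
        (∑ p : Fin v × Fin u, Multiset.count s(Sum.inl p.1, Sum.inr p.2) q.2) = 2 := by
      intro q hq
      have hq' := Multiset.mem_filter.1 hq
      obtain ⟨n, C⟩ := q
      have hn2 : n = 2 := hq'.2
      subst hn2
      obtain ⟨hqm, f, hfi, hCE⟩ := hzip _ (hZmem _ hq'.1)
      have hCCs : C ∈ Cs := by
        rw [← hsnd]
        exact List.mem_map_of_mem (hZmem _ hq'.1)
      have hmem0 : s(f 0, f 1) ∈ C := by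
        rw [show C = cycleEdges f from hCE, cycleEdges_two]
        simp [Multiset.mem_replicate]
      obtain ⟨p0, hp0⟩ := hcross C hCCs _ hmem0
      show (∑ p : Fin v × Fin u, Multiset.count s(Sum.inl p.1, Sum.inr p.2) C) = 2
      rw [show C = cycleEdges f from hCE, cycleEdges_two]
      have hterm : ∀ p : Fin v × Fin u,
          Multiset.count s(Sum.inl p.1, Sum.inr p.2) (Multiset.replicate 2 s(f 0, f 1))
            = if p = p0 then 2 else 0 := by
        intro p
        rw [Multiset.count_replicate]
        have hiff : (s(f 0, f 1) = s(Sum.inl p.1, Sum.inr p.2)) ↔ p = p0 := by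
          constructor
          · intro hh
            have h3 : s(Sum.inl p.1, Sum.inr p.2) = s(Sum.inl p0.1, Sum.inr p0.2) := by
              rw [← hh, hp0]
            rcases Sym2.eq_iff.1 h3 with ⟨ha, hb⟩ | ⟨ha, hb⟩
            · have h4 : p.1 = p0.1 := Sum.inl_injective ha
              have h5 : p.2 = p0.2 := Sum.inr_injective hb
              exact Prod.ext h4 h5
            · exact absurd ha (by simp)
          · intro hh
            rw [hh, hp0]
        split_ifs with h6 h7 h8
        · rfl
        · exact absurd (hiff.1 h6) h7
        · exact absurd (hiff.2 h8) h6
        · rfl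
      rw [Finset.sum_congr rfl (fun p _ => hterm p)]
      rw [Finset.sum_ite_eq' Finset.univ p0 (fun _ => 2)]
      simp
    have hsum2 : (∑ p : Fin v × Fin u, ((Zm.filter (fun q => q.1 = 2)).map
          (fun q => Multiset.count s(Sum.inl p.1, Sum.inr p.2) q.2)).sum)
        = 2 * Multiset.card (Zm.filter (fun q => q.1 = 2)) := by
      rw [hswap, Multiset.map_congr rfl hinner, Multiset.map_const', Multiset.sum_replicate,
        smul_eq_mul]
      omega
    have hcount2 : (M.count 2 : ℕ) = Multiset.card (Zm.filter (fun q => q.1 = 2)) := by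
      have h1 : (M.count 2 : ℕ) = Multiset.count 2 (↑M : Multiset ℕ) :=
        (Multiset.coe_count 2 M).symm
      have h2 : (↑M : Multiset ℕ) = Zm.map Prod.fst := by
        rw [hZm, Multiset.map_coe, hfst]
      rw [h1, h2, Multiset.count_map]
      congr 1
      apply Multiset.filter_congr
      intro q _
      constructor
      · intro hh; exact hh.symm
      · intro hh; exact hh.symm
    have hfinal : (∑ p : Fin v × Fin u, ((Zm.filter (fun q => q.1 = 2)).map
          (fun q => Multiset.count s(Sum.inl p.1, Sum.inr p.2) q.2)).sum)
        ≤ (v * u) * (lam - 1) := by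
      calc _ ≤ ∑ _p : Fin v × Fin u, (lam - 1) :=
            Finset.sum_le_sum (fun p _ => hn2le p)
        _ = (v * u) * (lam - 1) := by
            rw [Finset.sum_const, smul_eq_mul, Finset.card_univ]
            simp [Fintype.card_prod]
    have hmulassoc : (lam - 1) * v * u = (v * u) * (lam - 1) := by ring
    omega
end

section
/- Let λ be an even positive integer and let v, u be positive integers with λv ≡ λu ≡ 0 (mod 2). Let m_t be an even integer with 4 ≤ m_t ≤ 2·min(v,u), let k = (m_t − 2)/2, and suppose λvu ≥ m_t + 4k and λvu − m_t − 4k is even with r = (λvu − m_t − 4k)/2 ≥ 0. Then λK_{v,u} has a cycle decomposition into r cycles of length 2, k cycles of length 4, and one cycle of length m_t. -/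
namespace SmallAux
open CycleDecompBipartite

variable {v u : ℕ}

def aV (hv : 0 < v) (i : ℕ) : Fin v := ⟨i % v, Nat.mod_lt _ hv⟩

def bU (hu : 0 < u) (j : ℕ) : Fin u := ⟨j % u, Nat.mod_lt _ hu⟩

def ιe : Fin v × Fin u → Sym2 (Fin v ⊕ Fin u) := fun p => s(Sum.inl p.1, Sum.inr p.2)

def pp (hv : 0 < v) (hu : 0 < u) (i j : ℕ) : Fin v × Fin u := (aV hv i, bU hu j)

def ed (hv : 0 < v) (hu : 0 < u) (i j : ℕ) : Sym2 (Fin v ⊕ Fin u) := ιe (pp hv hu i j)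

lemma ed_eq (hv : 0 < v) (hu : 0 < u) (i j : ℕ) :
    s(Sum.inl (aV hv i), Sum.inr (bU hu j)) = ed hv hu i j := rfl

lemma ed_eq' (hv : 0 < v) (hu : 0 < u) (i j : ℕ) :
    s(Sum.inr (bU hu j), Sum.inl (aV hv i)) = ed hv hu i j := by
  rw [Sym2.eq_swap]; rfl

def gg (hv : 0 < v) (hu : 0 < u) (i : ℕ) : Fin v ⊕ Fin u :=
  if i % 2 = 0 then Sum.inl (aV hv (i / 2)) else Sum.inr (bU hu (i / 2))

lemma gg_even (hv : 0 < v) (hu : 0 < u) {i j : ℕ} (h : i = 2 * j) :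
    gg hv hu i = Sum.inl (aV hv j) := by
  subst h
  have h1 : (2 * j) % 2 = 0 := by omega
  have h2 : (2 * j) / 2 = j := by omega
  simp [gg, h1, h2]

lemma gg_odd (hv : 0 < v) (hu : 0 < u) {i j : ℕ} (h : i = 2 * j + 1) :
    gg hv hu i = Sum.inr (bU hu j) := by
  subst h
  have h1 : (2 * j + 1) % 2 = 1 := by omega
  have h2 : (2 * j + 1) / 2 = j := by omega
  simp [gg, h1, h2]

lemma cycleEdges_nat {V : Type*} (m : ℕ) (g : ℕ → V) :
    cycleEdges (fun i : Fin m => g i) =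
      ((List.range m).map fun i => s(g i, g ((i + 1) % m)) : List (Sym2 V)) := by
  rw [cycleEdges, Multiset.coe_eq_coe]
  apply List.Perm.of_eq
  apply List.ext_getElem
  · simp
  · intro i h1 h2
    simp [List.getElem_finRange, List.getElem_range]

lemma cycle_split {V : Type*} (m : ℕ) (hm : 1 ≤ m) (g : ℕ → V) :
    ((List.range m).map (fun i => s(g i, g ((i + 1) % m))) : Multiset (Sym2 V)) =
      ((List.range (m - 1)).map (fun i => s(g i, g (i + 1))) : List (Sym2 V))
        + {s(g (m - 1), g 0)} := by
  obtain ⟨M, rfl⟩ : ∃ M, m = M + 1 := ⟨m - 1, by omega⟩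
  rw [List.range_succ, List.map_append]
  rw [← Multiset.coe_add]
  congr 1
  · congr 1
    apply List.map_congr_left
    intro a ha
    have : a < M := List.mem_range.mp ha
    rw [Nat.mod_eq_of_lt (by omega)]
  · simp [Nat.mod_self]

/-- The `2n`-cycle. -/
def mtC (hv : 0 < v) (hu : 0 < u) (n : ℕ) : Multiset (Sym2 (Fin v ⊕ Fin u)) :=
  cycleEdges (fun i : Fin (2 * n) => gg hv hu i)

/-- The path part of the `2n`-cycle. -/
def pathN (hv : 0 < v) (hu : 0 < u) (n : ℕ) : Multiset (Sym2 (Fin v ⊕ Fin u)) :=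
  ((List.range (2 * n - 1)).map (fun i => s(gg hv hu i, gg hv hu (i + 1))) : List (Sym2 _))

lemma mtC_eq (hv : 0 < v) (hu : 0 < u) (n : ℕ) (hn : 1 ≤ n) :
    mtC hv hu n = pathN hv hu n + {s(gg hv hu (2 * n - 1), gg hv hu 0)} := by
  rw [mtC, cycleEdges_nat, cycle_split _ (by omega), pathN]

/-- The 4-cycle `a_0 b_i a_{i+1} b_{i+1}`. -/
def fourC (hv : 0 < v) (hu : 0 < u) (i : ℕ) : Multiset (Sym2 (Fin v ⊕ Fin u)) :=
  cycleEdges ![Sum.inl (aV hv 0), Sum.inr (bU hu i), Sum.inl (aV hv (i + 1)),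
    Sum.inr (bU hu (i + 1))]

lemma fourC_eq (hv : 0 < v) (hu : 0 < u) (i : ℕ) :
    fourC hv hu i = {ed hv hu 0 i} + {ed hv hu (i + 1) i} + {ed hv hu (i + 1) (i + 1)}
      + {ed hv hu 0 (i + 1)} := by
  show ({s(Sum.inl (aV hv 0), Sum.inr (bU hu i)), s(Sum.inr (bU hu i), Sum.inl (aV hv (i+1))),
      s(Sum.inl (aV hv (i+1)), Sum.inr (bU hu (i+1))),
      s(Sum.inr (bU hu (i+1)), Sum.inl (aV hv 0))} : Multiset _) = _
  rw [ed_eq, ed_eq', ed_eq, ed_eq']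
  simp only [Multiset.insert_eq_cons, ← Multiset.singleton_add]
  abel


lemma path_succ (hv : 0 < v) (hu : 0 < u) (n : ℕ) (hn : 1 ≤ n) :
    pathN hv hu (n + 1) = pathN hv hu n
      + ({s(gg hv hu (2 * n - 1), gg hv hu (2 * n))}
          + {s(gg hv hu (2 * n), gg hv hu (2 * n + 1))}) := by
  obtain ⟨N, rfl⟩ : ∃ N, n = N + 1 := ⟨n - 1, by omega⟩
  rw [pathN, pathN]
  rw [show 2 * (N + 1 + 1) - 1 = (2 * N + 1) + 1 + 1 by omega]
  rw [show 2 * (N + 1) - 1 = 2 * N + 1 by omega]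
  rw [List.range_succ, List.range_succ, List.map_append, List.map_append]
  simp only [List.map_cons, List.map_nil, ← Multiset.coe_add, Multiset.coe_singleton]
  rw [show 2 * N + 1 + 1 = 2 * (N + 1) by omega]
  abel

lemma ed_pp (hv : 0 < v) (hu : 0 < u) (i j : ℕ) : ιe (pp hv hu i j) = ed hv hu i j := rfl

/-- The "half" multiset of pairs. -/
def TT (hv : 0 < v) (hu : 0 < u) (n : ℕ) : Multiset (Fin v × Fin u) :=
  (((List.range n).map (fun i => pp hv hu i i)
    ++ (List.range (n - 1)).map (fun i => pp hv hu (i + 1) i)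
    ++ (List.range (n - 1)).map (fun j => pp hv hu 0 (j + 1)) : List (Fin v × Fin u)))

lemma TT_succ (hv : 0 < v) (hu : 0 < u) (n : ℕ) (hn : 1 ≤ n) :
    TT hv hu (n + 1) = TT hv hu n
      + ({pp hv hu n n} + {pp hv hu n (n - 1)} + {pp hv hu 0 n}) := by
  rw [TT, TT, show n + 1 - 1 = (n - 1) + 1 by omega]
  rw [List.range_succ, List.range_succ]
  simp only [List.map_append, List.map_cons, List.map_nil, ← Multiset.coe_add,
    Multiset.coe_singleton]
  rw [show n - 1 + 1 = n by omega]
  abel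

lemma key (hv : 0 < v) (hu : 0 < u) (n : ℕ) (h2 : 2 ≤ n) :
    mtC hv hu n + ((List.range (n - 1)).map (fourC hv hu)).sum
      = 2 • (TT hv hu n).map ιe := by
  induction n, h2 using Nat.le_induction with
  | base =>
    rw [mtC_eq hv hu 2 (by omega)]
    rw [pathN]
    norm_num [List.range_succ]
    rw [gg_even hv hu (show (0:ℕ) = 2 * 0 by omega), gg_odd hv hu (show (1:ℕ) = 2 * 0 + 1 by omega),
      gg_even hv hu (show (2:ℕ) = 2 * 1 by omega), gg_odd hv hu (show (3:ℕ) = 2 * 1 + 1 by omega)]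
    rw [fourC_eq]
    rw [TT]
    norm_num [List.range_succ]
    rw [ed_eq, ed_eq', ed_eq, ed_eq']
    simp only [Multiset.insert_eq_cons, ← Multiset.singleton_add, ← Multiset.cons_coe,
      Multiset.coe_nil, add_zero, Multiset.coe_singleton, Multiset.map_cons,
      Multiset.map_singleton, ed_pp, two_nsmul]
    abel
  | succ n hn ih =>
    have h1 : 1 ≤ n := by omega
    have hA : mtC hv hu (n + 1) + 2 • ({ed hv hu 0 (n - 1)} : Multiset _)
        = mtC hv hu n + fourC hv hu (n - 1) := by
      rw [mtC_eq hv hu (n + 1) (by omega), mtC_eq hv hu n (by omega), path_succ hv hu n h1,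
        fourC_eq, show n - 1 + 1 = n by omega]
      rw [show 2 * (n + 1) - 1 = 2 * n + 1 by omega]
      rw [gg_odd hv hu (show 2 * n - 1 = 2 * (n - 1) + 1 by omega),
        gg_even hv hu (rfl : 2 * n = 2 * n),
        gg_odd hv hu (rfl : 2 * n + 1 = 2 * n + 1),
        gg_even hv hu (show (0 : ℕ) = 2 * 0 by omega)]
      rw [ed_eq' hv hu n (n - 1), ed_eq hv hu n n, ed_eq' hv hu 0 n, ed_eq' hv hu 0 (n - 1)]
      abel
    rw [show n + 1 - 1 = (n - 1) + 1 by omega, List.range_succ, List.map_append,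
      List.sum_append]
    simp only [List.map_cons, List.map_nil, List.sum_cons, List.sum_nil, add_zero]
    have hmain : mtC hv hu (n + 1)
          + (((List.range (n - 1)).map (fourC hv hu)).sum + fourC hv hu (n - 1))
          + 2 • ({ed hv hu 0 (n - 1)} : Multiset _)
        = 2 • Multiset.map ιe (TT hv hu (n + 1)) + 2 • ({ed hv hu 0 (n - 1)} : Multiset _) := by
      calc mtC hv hu (n + 1)
            + (((List.range (n - 1)).map (fourC hv hu)).sum + fourC hv hu (n - 1))
            + 2 • ({ed hv hu 0 (n - 1)} : Multiset _)
          = (mtC hv hu (n + 1) + 2 • ({ed hv hu 0 (n - 1)} : Multiset _))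
            + (((List.range (n - 1)).map (fourC hv hu)).sum + fourC hv hu (n - 1)) := by abel
        _ = (mtC hv hu n + fourC hv hu (n - 1))
            + (((List.range (n - 1)).map (fourC hv hu)).sum + fourC hv hu (n - 1)) := by
            rw [hA]
        _ = (mtC hv hu n + ((List.range (n - 1)).map (fourC hv hu)).sum)
            + (fourC hv hu (n - 1) + fourC hv hu (n - 1)) := by abel
        _ = 2 • Multiset.map ιe (TT hv hu n)
            + (fourC hv hu (n - 1) + fourC hv hu (n - 1)) := by rw [ih]
        _ = 2 • Multiset.map ιe (TT hv hu (n + 1)) + 2 • ({ed hv hu 0 (n - 1)} : Multiset _) := by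
            rw [TT_succ hv hu n h1]
            simp only [Multiset.map_add, Multiset.map_singleton, ed_pp, fourC_eq]
            rw [show n - 1 + 1 = n by omega]
            abel
    exact add_right_cancel hmain
lemma pp_inj (hv : 0 < v) (hu : 0 < u) {i i' j j' : ℕ} (hi : i < v) (hi' : i' < v)
    (hj : j < u) (hj' : j' < u) (h : pp hv hu i j = pp hv hu i' j') : i = i' ∧ j = j' := by
  simp only [pp, aV, bU, Prod.ext_iff, Fin.mk.injEq, Nat.mod_eq_of_lt hi, Nat.mod_eq_of_lt hi',
    Nat.mod_eq_of_lt hj, Nat.mod_eq_of_lt hj'] at h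
  exact h

lemma TT_nodup (hv : 0 < v) (hu : 0 < u) (n : ℕ) (hnv : n ≤ v) (hnu : n ≤ u) :
    (TT hv hu n).Nodup := by
  rw [TT, Multiset.coe_nodup, List.nodup_append, List.nodup_append]
  refine ⟨⟨?_, ?_, ?_⟩, ?_, ?_⟩
  · refine List.Nodup.map_on ?_ List.nodup_range
    intro x hx y hy h
    simp only [List.mem_range] at hx hy
    exact (pp_inj hv hu (by omega) (by omega) (by omega) (by omega) h).1
  · refine List.Nodup.map_on ?_ List.nodup_range
    intro x hx y hy h
    simp only [List.mem_range] at hx hy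
    have := pp_inj hv hu (by omega : x + 1 < v) (by omega : y + 1 < v) (by omega : x < u)
      (by omega : y < u) h
    omega
  · intro a ha b hb hab; subst hab
    simp only [List.mem_map, List.mem_range] at ha hb
    obtain ⟨x, hx, hxa⟩ := ha
    obtain ⟨y, hy, hya⟩ := hb
    have := pp_inj hv hu (by omega : x < v) (by omega : y + 1 < v) (by omega : x < u)
      (by omega : y < u) (hxa.trans hya.symm)
    omega
  · refine List.Nodup.map_on ?_ List.nodup_range
    intro x hx y hy h
    simp only [List.mem_range] at hx hy
    have := pp_inj hv hu (by omega : (0:ℕ) < v) (by omega : (0:ℕ) < v) (by omega : x + 1 < u)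
      (by omega : y + 1 < u) h
    omega
  · intro a ha b hb hab; subst hab
    simp only [List.mem_append, List.mem_map, List.mem_range] at ha hb
    obtain ⟨y, hy, hya⟩ := hb
    rcases ha with ⟨x, hx, hxa⟩ | ⟨x, hx, hxa⟩
    · have := pp_inj hv hu (by omega : x < v) (by omega : (0:ℕ) < v) (by omega : x < u)
        (by omega : y + 1 < u) (hxa.trans hya.symm)
      omega
    · have := pp_inj hv hu (by omega : x + 1 < v) (by omega : (0:ℕ) < v) (by omega : x < u)
        (by omega : y + 1 < u) (hxa.trans hya.symm)
      omega

lemma TT_card (hv : 0 < v) (hu : 0 < u) (n : ℕ) :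
    Multiset.card (TT hv hu n) = n + (n - 1) + (n - 1) := by
  simp [TT]
  omega

lemma isCycleM_two (hv : 0 < v) (hu : 0 < u) (p : Fin v × Fin u) :
    IsCycleM 2 (cycleEdges ![Sum.inl p.1, Sum.inr p.2] : Multiset (Sym2 (Fin v ⊕ Fin u))) := by
  refine ⟨le_refl 2, ![Sum.inl p.1, Sum.inr p.2], ?_, rfl⟩
  intro a b h
  fin_cases a <;> fin_cases b <;> simp_all

lemma isCycleM_four (hv : 0 < v) (hu : 0 < u) (i : ℕ) (hiv : i + 1 < v) (hiu : i + 1 < u) :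
    IsCycleM 4 (fourC hv hu i) := by
  refine ⟨by omega, ![Sum.inl (aV hv 0), Sum.inr (bU hu i), Sum.inl (aV hv (i + 1)),
    Sum.inr (bU hu (i + 1))], ?_, rfl⟩
  intro a b h
  have h0 : (0 : ℕ) % v = 0 := Nat.mod_eq_of_lt hv
  have h1 : (i + 1) % v = i + 1 := Nat.mod_eq_of_lt hiv
  have h2 : i % u = i := Nat.mod_eq_of_lt (by omega)
  have h3 : (i + 1) % u = i + 1 := Nat.mod_eq_of_lt hiu
  fin_cases a <;> fin_cases b <;> simp_all [aV, bU, Fin.ext_iff] <;> omega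

lemma isCycleM_mt (hv : 0 < v) (hu : 0 < u) (n : ℕ) (hn2 : 2 ≤ n) (hnv : n ≤ v)
    (hnu : n ≤ u) : IsCycleM (2 * n) (mtC hv hu n) := by
  refine ⟨by omega, fun i : Fin (2 * n) => gg hv hu i, ?_, rfl⟩
  intro i j h
  have hi := i.isLt
  have hj := j.isLt
  apply Fin.ext
  simp only [gg, aV, bU] at h
  split_ifs at h with c1 c2 c2
  all_goals first
    | (simp only [Sum.inl.injEq, Sum.inr.injEq, Fin.mk.injEq] at h
       rw [Nat.mod_eq_of_lt (by omega), Nat.mod_eq_of_lt (by omega)] at h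
       omega)
    | exact absurd h (by simp)

lemma forall₂_replicate {α β : Type*} {R : α → β → Prop} {a : α} :
    ∀ (l : List β), (∀ b ∈ l, R a b) → List.Forall₂ R (List.replicate l.length a) l
  | [], _ => List.Forall₂.nil
  | b :: l, h => by
    rw [List.length_cons, List.replicate_succ]
    exact List.Forall₂.cons (h b (by simp))
      (forall₂_replicate l (fun x hx => h x (by simp [hx])))
end SmallAux

open CycleDecompBipartite in
/-- small decompositions, `λ` even: for even `λ`, an even `m_t` with
`4 ≤ m_t ≤ 2 min(v,u)`, `k = (m_t - 2)/2`, and `r = (λvu - m_t - 4k)/2 ≥ 0` (with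
`λvu - m_t - 4k` even), `λ K_{v,u}` decomposes into `r` 2-cycles, `k` 4-cycles and one
`m_t`-cycle. -/
theorem small_decomposition_even (lam v u : ℕ) (hlam : 0 < lam) (hv : 0 < v) (hu : 0 < u)
    (hle : Even lam) (hev : Even (lam * v)) (heu : Even (lam * u))
    (mt k r : ℕ) (hmt_even : Even mt) (hmt4 : 4 ≤ mt) (hmtb : mt ≤ 2 * min v u)
    (hk : k = (mt - 2) / 2)
    (hge : mt + 4 * k ≤ lam * v * u)
    (hpar : Even (lam * v * u - mt - 4 * k))
    (hr : r = (lam * v * u - mt - 4 * k) / 2) :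
    ∃ Cs : List (Multiset (Sym2 (Fin v ⊕ Fin u))),
      List.Forall₂ IsCycleM (List.replicate r 2 ++ List.replicate k 4 ++ [mt]) Cs ∧
      Cs.sum = lamK lam v u := by
  obtain ⟨c, hc⟩ := hle
  obtain ⟨m, rfl⟩ : ∃ m, lam = 2 * m := ⟨c, by omega⟩
  clear hc
  obtain ⟨d, hd⟩ := hmt_even
  obtain ⟨n, rfl⟩ : ∃ n, mt = 2 * n := ⟨d, by omega⟩
  clear hd
  have hm1 : 1 ≤ m := by omega
  have hn2 : 2 ≤ n := by omega
  have hnv : n ≤ v := by omega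
  have hnu : n ≤ u := by omega
  have hkn : k = n - 1 := by omega
  subst hkn
  subst hr
  -- the multiset of "leftover" pairs
  have hle1 : SmallAux.TT hv hu n ≤ m • (Finset.univ : Finset (Fin v × Fin u)).val := by
    rw [Multiset.le_iff_count]
    intro a
    have h1 : Multiset.count a (SmallAux.TT hv hu n) ≤ 1 :=
      Multiset.nodup_iff_count_le_one.mp (SmallAux.TT_nodup hv hu n hnv hnu) a
    have h2 : Multiset.count a (Finset.univ : Finset (Fin v × Fin u)).val = 1 :=
      Multiset.count_eq_one_of_mem Finset.univ.nodup (Finset.mem_univ a)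
    rw [Multiset.count_nsmul, h2]
    omega
  obtain ⟨W, hW⟩ := Multiset.le_iff_exists_add.mp hle1
  have hcu : Multiset.card (Finset.univ : Finset (Fin v × Fin u)).val = v * u := by
    have h1 : (Finset.univ : Finset (Fin v × Fin u)).card = v * u := by
      rw [Finset.card_univ]
      simp [Fintype.card_prod]
    rw [← Finset.card_def]
    exact h1
  have hWcard : Multiset.card W = (2 * m * v * u - 2 * n - 4 * (n - 1)) / 2 := by
    have hc := congrArg Multiset.card hW
    rw [Multiset.card_nsmul, Multiset.card_add, SmallAux.TT_card, hcu] at hc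
    have hP : 2 * m * v * u = 2 * (m * (v * u)) := by ring
    omega
  -- the pieces
  refine ⟨(W.toList.map fun p => cycleEdges ![Sum.inl p.1, Sum.inr p.2])
    ++ (List.range (n - 1)).map (SmallAux.fourC hv hu) ++ [SmallAux.mtC hv hu n], ?_, ?_⟩
  · refine List.rel_append (List.rel_append ?_ ?_) ?_
    · have hlen : (W.toList.map fun p : Fin v × Fin u =>
          (cycleEdges ![Sum.inl p.1, Sum.inr p.2] : Multiset (Sym2 (Fin v ⊕ Fin u)))).length
          = (2 * m * v * u - 2 * n - 4 * (n - 1)) / 2 := by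
        simp [Multiset.length_toList, hWcard]
      have h := SmallAux.forall₂_replicate (R := IsCycleM) (a := 2)
        (W.toList.map fun p => cycleEdges ![Sum.inl p.1, Sum.inr p.2]) ?_
      · rwa [hlen] at h
      · intro C hC
        obtain ⟨p, _, rfl⟩ := List.mem_map.mp hC
        exact SmallAux.isCycleM_two hv hu p
    · have hlen : ((List.range (n - 1)).map (SmallAux.fourC hv hu)).length = n - 1 := by simp
      have h := SmallAux.forall₂_replicate (R := IsCycleM) (a := 4)
        ((List.range (n - 1)).map (SmallAux.fourC hv hu)) ?_
      · rwa [hlen] at h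
      · intro C hC
        obtain ⟨i, hi, rfl⟩ := List.mem_map.mp hC
        have hi' : i < n - 1 := List.mem_range.mp hi
        exact SmallAux.isCycleM_four hv hu i (by omega) (by omega)
    · exact List.Forall₂.cons (SmallAux.isCycleM_mt hv hu n hn2 hnv hnu) List.Forall₂.nil
  · rw [List.sum_append, List.sum_append, List.sum_cons, List.sum_nil, add_zero]
    have h2sum : (W.toList.map fun p : Fin v × Fin u =>
        (cycleEdges ![Sum.inl p.1, Sum.inr p.2] : Multiset (Sym2 (Fin v ⊕ Fin u)))).sum
        = 2 • Multiset.map SmallAux.ιe W := by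
      have e1 : (W.toList.map fun p : Fin v × Fin u =>
          (cycleEdges ![Sum.inl p.1, Sum.inr p.2] : Multiset (Sym2 (Fin v ⊕ Fin u)))).sum
          = (Multiset.map (fun p : Fin v × Fin u =>
              (cycleEdges ![Sum.inl p.1, Sum.inr p.2] : Multiset (Sym2 (Fin v ⊕ Fin u)))) W).sum := by
        conv_rhs => rw [← Multiset.coe_toList W]
        rw [Multiset.map_coe, Multiset.sum_coe]
      rw [e1]
      have hcy : ∀ p : Fin v × Fin u,
          (cycleEdges ![Sum.inl p.1, Sum.inr p.2] : Multiset (Sym2 (Fin v ⊕ Fin u)))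
            = ({SmallAux.ιe p} : Multiset _) + {SmallAux.ιe p} := by
        intro p
        show ({s(Sum.inl p.1, Sum.inr p.2), s(Sum.inr p.2, Sum.inl p.1)} :
          Multiset (Sym2 (Fin v ⊕ Fin u))) = _
        rw [Sym2.eq_swap (a := (Sum.inr p.2 : Fin v ⊕ Fin u)) (b := Sum.inl p.1)]
        rw [Multiset.singleton_add]
        rfl
      rw [Multiset.map_congr rfl (fun p _ => hcy p), Multiset.sum_map_add]
      rw [show (fun p : Fin v × Fin u => ({SmallAux.ιe p} : Multiset (Sym2 (Fin v ⊕ Fin u))))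
        = (fun e => ({e} : Multiset (Sym2 (Fin v ⊕ Fin u)))) ∘ SmallAux.ιe from rfl]
      rw [← Multiset.map_map, Multiset.sum_map_singleton, two_nsmul]
    rw [h2sum]
    have hkey := SmallAux.key hv hu n hn2
    calc 2 • Multiset.map SmallAux.ιe W
          + ((List.range (n - 1)).map (SmallAux.fourC hv hu)).sum + SmallAux.mtC hv hu n
        = 2 • Multiset.map SmallAux.ιe W + (SmallAux.mtC hv hu n
            + ((List.range (n - 1)).map (SmallAux.fourC hv hu)).sum) := by abel
      _ = 2 • Multiset.map SmallAux.ιe W + 2 • Multiset.map SmallAux.ιe (SmallAux.TT hv hu n) := by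
          rw [hkey]
      _ = 2 • Multiset.map SmallAux.ιe (SmallAux.TT hv hu n + W) := by
          rw [Multiset.map_add, smul_add]; abel
      _ = 2 • Multiset.map SmallAux.ιe (m • (Finset.univ : Finset (Fin v × Fin u)).val) := by
          rw [← hW]
      _ = (2 * m) • Multiset.map SmallAux.ιe (Finset.univ : Finset (Fin v × Fin u)).val := by
          rw [Multiset.map_nsmul, ← smul_smul]
      _ = lamK (2 * m) v u := rfl
end
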